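/- arXiv:1208.4749 — 6 statements merged into one kernel-verified Lean document; each statement's English description precedes it below -/
import Mathlib

section
/- Let G be a group and let H : {1} = H₀ ◁ H₁ ◁ ⋯ ◁ H_n = G and K : {1} = K₀ ◁ K₁ ◁ ⋯ ◁ K_n = G be composition series of G of the same length n. Then there exists a unique permutation π of {1,…,n} such that, for every i ∈ {1,…,n}, the quotient H_i/H_{i−1} is subnormally down-and-up projective to K_{π(i)}/K_{π(i)−1}. -/
open scoped Pointwise

/-- A composition series of `G` of length `n`: a chain `⊥ = H 0 ◁ H 1 ◁ ⋯ ◁ H n = ⊤`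
in which each member is a maximal proper normal subgroup of the next one. -/
def IsCompositionSeries {G : Type*} [Group G] {n : ℕ} (H : Fin (n + 1) → Subgroup G) : Prop :=
  H 0 = ⊥ ∧ H (Fin.last n) = ⊤ ∧
    ∀ i : Fin n,
      H i.castSucc < H i.succ ∧
      ((H i.castSucc).subgroupOf (H i.succ)).Normal ∧
      ∀ N : Subgroup G, N ≤ H i.succ → (N.subgroupOf (H i.succ)).Normal →
        H i.castSucc ≤ N → N = H i.castSucc ∨ N = H i.succ

/-- A subgroup `Y` of `G` is subnormal if there is a finite chain
`Y = Z 0 ⊴ Z 1 ⊴ ⋯ ⊴ Z m = G` with each member normal in the next one. -/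
def IsSubnormal {G : Type*} [Group G] (Y : Subgroup G) : Prop :=
  ∃ (m : ℕ) (Z : Fin (m + 1) → Subgroup G), Z 0 = Y ∧ Z (Fin.last m) = ⊤ ∧
    ∀ i : Fin m, Z i.castSucc ≤ Z i.succ ∧ ((Z i.castSucc).subgroupOf (Z i.succ)).Normal

/-- The quotient `B/A` is subnormally down-and-up projective to `D/C`: there are
subnormal subgroups `X ⊴ Y` of `G` with `AY = B`, `A ∩ Y = X`, `CY = D`, `C ∩ Y = X`. -/
def SubnormalDownUpProj {G : Type*} [Group G] (A B C D : Subgroup G) : Prop :=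
  ∃ X Y : Subgroup G, IsSubnormal X ∧ IsSubnormal Y ∧ X ≤ Y ∧ (X.subgroupOf Y).Normal ∧
    (↑A * ↑Y : Set G) = ↑B ∧ A ⊓ Y = X ∧ (↑C * ↑Y : Set G) = ↑D ∧ C ⊓ Y = X

namespace JHAux

variable {G : Type*} [Group G]

lemma conj_mem_of_normal {A B : Subgroup G} (hAB : A ≤ B) (hN : (A.subgroupOf B).Normal)
    {b a : G} (hb : b ∈ B) (ha : a ∈ A) : b * a * b⁻¹ ∈ A := by
  have h := hN.conj_mem ⟨a, hAB ha⟩ (Subgroup.mem_subgroupOf.2 ha) ⟨b, hb⟩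
  rw [Subgroup.mem_subgroupOf] at h
  exact h

lemma normal_of_conj {A B : Subgroup G} (h : ∀ b ∈ B, ∀ a ∈ A, b * a * b⁻¹ ∈ A) :
    (A.subgroupOf B).Normal := by
  constructor
  intro x hx g
  rw [Subgroup.mem_subgroupOf] at hx ⊢
  exact h g g.2 x hx

lemma mul_eq_sup {A Y B : Subgroup G} (hAB : A ≤ B) (hN : (A.subgroupOf B).Normal) (hY : Y ≤ B) :
    (↑A * ↑Y : Set G) = ↑(A ⊔ Y : Subgroup G) := by
  have hS : ∃ S : Subgroup G, (S : Set G) = (↑A * ↑Y : Set G) := by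
    refine ⟨{ carrier := (↑A * ↑Y : Set G), one_mem' := ?_, mul_mem' := ?_, inv_mem' := ?_ }, rfl⟩
    · rintro x x' ⟨a, ha, y, hy, rfl⟩ ⟨a', ha', y', hy', rfl⟩
      refine ⟨a * (y * a' * y⁻¹), mul_mem ha (conj_mem_of_normal hAB hN (hY hy) ha'),
        y * y', mul_mem hy hy', by group⟩
    · exact ⟨1, A.one_mem, 1, Y.one_mem, one_mul 1⟩
    · rintro x ⟨a, ha, y, hy, rfl⟩
      refine ⟨y⁻¹ * a⁻¹ * y, ?_, y⁻¹, inv_mem hy, by group⟩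
      have := conj_mem_of_normal hAB hN (inv_mem (hY hy)) (inv_mem ha)
      simpa using this
  obtain ⟨S, hSeq⟩ := hS
  apply Set.Subset.antisymm
  · rintro x ⟨a, ha, y, hy, rfl⟩
    exact mul_mem ((le_sup_left : A ≤ A ⊔ Y) ha) ((le_sup_right : Y ≤ A ⊔ Y) hy)
  · have h1 : A ≤ S := by
      intro a ha
      have : a ∈ (↑A * ↑Y : Set G) := ⟨a, ha, 1, Y.one_mem, mul_one a⟩
      rw [← hSeq] at this
      exact this
    have h2 : Y ≤ S := by
      intro y hy
      have : y ∈ (↑A * ↑Y : Set G) := ⟨1, A.one_mem, y, hy, one_mul y⟩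
      rw [← hSeq] at this
      exact this
    intro x hx
    have : x ∈ S := (sup_le h1 h2 : A ⊔ Y ≤ S) hx
    rwa [← hSeq]

lemma mem_sup_decomp {A Y B : Subgroup G} (hAB : A ≤ B) (hN : (A.subgroupOf B).Normal)
    (hY : Y ≤ B) {x : G} (hx : x ∈ A ⊔ Y) : ∃ a ∈ A, ∃ y ∈ Y, a * y = x := by
  have : x ∈ (↑A * ↑Y : Set G) := by
    rw [mul_eq_sup hAB hN hY]
    exact hx
  exact this

lemma mem_normalizer_of_maps {S : Subgroup G} {u : G}
    (h1 : ∀ x ∈ S, u * x * u⁻¹ ∈ S) (h2 : ∀ x ∈ S, u⁻¹ * x * u ∈ S) : u ∈ Subgroup.normalizer (S : Set G) := by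
  rw [Subgroup.mem_normalizer_iff]
  intro h
  constructor
  · exact fun hh => h1 h hh
  · intro hh
    have := h2 _ hh
    have he : u⁻¹ * (u * h * u⁻¹) * u = h := by group
    rwa [he] at this

lemma sup_conj_le {S T : Subgroup G} {u : G}
    (h1 : ∀ x ∈ S, u * x * u⁻¹ ∈ S) (h2 : ∀ x ∈ T, u * x * u⁻¹ ∈ T) :
    ∀ x ∈ S ⊔ T, u * x * u⁻¹ ∈ S ⊔ T := by
  intro x hx
  have hmap : Subgroup.map (MulAut.conj u).toMonoidHom (S ⊔ T) ≤ S ⊔ T := by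
    rw [Subgroup.map_sup]
    refine sup_le (le_trans ?_ le_sup_left) (le_trans ?_ le_sup_right)
    · intro y hy
      obtain ⟨a, ha, rfl⟩ := Subgroup.mem_map.1 hy
      simpa using h1 a ha
    · intro y hy
      obtain ⟨a, ha, rfl⟩ := Subgroup.mem_map.1 hy
      simpa using h2 a ha
  have := hmap (Subgroup.mem_map_of_mem _ hx)
  simpa using this

lemma mem_normalizer_sup {S T : Subgroup G} {u : G}
    (h1 : ∀ x ∈ S, u * x * u⁻¹ ∈ S) (h2 : ∀ x ∈ T, u * x * u⁻¹ ∈ T)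
    (h1' : ∀ x ∈ S, u⁻¹ * x * u ∈ S) (h2' : ∀ x ∈ T, u⁻¹ * x * u ∈ T) :
    u ∈ Subgroup.normalizer ((S ⊔ T : Subgroup G) : Set G) := by
  refine mem_normalizer_of_maps (sup_conj_le h1 h2) ?_
  have := sup_conj_le (u := u⁻¹) (fun x hx => by simpa using h1' x hx)
    (fun x hx => by simpa using h2' x hx)
  intro x hx
  simpa using this x hx

lemma isSubnormal_top : IsSubnormal (⊤ : Subgroup G) :=
  ⟨0, fun _ => ⊤, rfl, rfl, fun i => i.elim0⟩

lemma IsSubnormal.step {X Y : Subgroup G} (hXY : X ≤ Y) (hN : (X.subgroupOf Y).Normal)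
    (hY : IsSubnormal Y) : IsSubnormal X := by
  obtain ⟨m, Z, h0, hl, hs⟩ := hY
  let W : Fin (m + 2) → Subgroup G := Fin.cons (α := fun _ => Subgroup G) X Z
  refine ⟨m + 1, W, Fin.cons_zero _ _, ?_, ?_⟩
  · have : Fin.last (m + 1) = (Fin.last m).succ := rfl
    rw [this]
    show Fin.cons (α := fun _ => Subgroup G) X Z (Fin.last m).succ = ⊤
    rw [Fin.cons_succ]
    exact hl
  · intro i
    induction i using Fin.cases with
    | zero =>
      have e1 : W (Fin.castSucc 0) = X := by
        rw [Fin.castSucc_zero]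
        exact Fin.cons_zero _ _
      have e2 : W (Fin.succ 0) = Y := by
        show Fin.cons (α := fun _ => Subgroup G) X Z (Fin.succ 0) = Y
        rw [Fin.cons_succ, h0]
      rw [e1, e2]
      exact ⟨hXY, hN⟩
    | succ j =>
      have e1 : W (Fin.castSucc j.succ) = Z j.castSucc := by
        rw [← Fin.succ_castSucc]
        show Fin.cons (α := fun _ => Subgroup G) X Z (Fin.succ j.castSucc) = Z j.castSucc
        rw [Fin.cons_succ]
      have e2 : W (Fin.succ j.succ) = Z j.succ := by
        show Fin.cons (α := fun _ => Subgroup G) X Z (Fin.succ j.succ) = Z j.succ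
        rw [Fin.cons_succ]
      rw [e1, e2]
      exact hs j

section Series

variable {n : ℕ}

lemma cs_mono {H : Fin (n + 1) → Subgroup G} (hH : IsCompositionSeries H) : Monotone H :=
  (Fin.strictMono_iff_lt_succ.2 fun i => (hH.2.2 i).1).monotone

lemma isSubnormal_of_cs {H : Fin (n + 1) → Subgroup G} (hH : IsCompositionSeries H) :
    ∀ t, IsSubnormal (H t) := by
  intro t
  induction t using Fin.reverseInduction with
  | last => rw [hH.2.1]; exact isSubnormal_top
  | cast i ih => exact IsSubnormal.step (le_of_lt (hH.2.2 i).1) (hH.2.2 i).2.1 ih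

lemma isSubnormal_inf_cs {K : Fin (n + 1) → Subgroup G} (hK : IsCompositionSeries K)
    {S : Subgroup G} (hS : IsSubnormal S) : ∀ t, IsSubnormal (S ⊓ K t) := by
  intro t
  induction t using Fin.reverseInduction with
  | last => rw [hK.2.1, inf_top_eq]; exact hS
  | cast j ih =>
    refine IsSubnormal.step (inf_le_inf_left S (le_of_lt (hK.2.2 j).1)) ?_ ih
    refine normal_of_conj ?_
    intro b hb x hx
    rw [Subgroup.mem_inf] at hb hx ⊢
    obtain ⟨hbS, hbK⟩ := hb
    obtain ⟨hxS, hxK⟩ := hx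
    exact ⟨mul_mem (mul_mem hbS hxS) (inv_mem hbS),
      conj_mem_of_normal (le_of_lt (hK.2.2 j).1) (hK.2.2 j).2.1 hbK hxK⟩

variable (H K : Fin (n + 1) → Subgroup G)

/-- The filtration of the `i`-th factor of `H` induced by `K`. -/
def F (i : Fin n) (j : Fin (n + 1)) : Subgroup G := H i.castSucc ⊔ (H i.succ ⊓ K j)

/-- The jump of the `K`-filtration of the `i`-th factor of `H` occurs at `j`. -/
def Jump (i j : Fin n) : Prop :=
  H i.succ ⊓ K j.castSucc ≤ H i.castSucc ∧
    H i.castSucc ⊔ (H i.succ ⊓ K j.succ) = H i.succ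

variable {H K}

lemma F_mono (hK : IsCompositionSeries K) (i : Fin n) : Monotone (F H K i) :=
  fun _ _ hj => sup_le_sup_left (inf_le_inf_left _ (cs_mono hK hj)) _

lemma F_zero (hK : IsCompositionSeries K) (i : Fin n) : F H K i 0 = H i.castSucc := by
  rw [F, hK.1, inf_bot_eq, sup_bot_eq]

lemma F_last (hH : IsCompositionSeries H) (hK : IsCompositionSeries K) (i : Fin n) :
    F H K i (Fin.last n) = H i.succ := by
  rw [F, hK.2.1, inf_top_eq, sup_eq_right.2 (le_of_lt (hH.2.2 i).1)]

lemma F_normal_step (hH : IsCompositionSeries H) (hK : IsCompositionSeries K) (i : Fin n)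
    (j : Fin n) : ((F H K i j.castSucc).subgroupOf (F H K i j.succ)).Normal := by
  have hAB : H i.castSucc ≤ H i.succ := le_of_lt (hH.2.2 i).1
  have hCD : K j.castSucc ≤ K j.succ := le_of_lt (hK.2.2 j).1
  have key : F H K i j.succ ≤ Subgroup.normalizer ((F H K i j.castSucc : Subgroup G) : Set G) := by
    refine sup_le (le_trans le_sup_left Subgroup.le_normalizer) ?_
    intro u hu
    rw [Subgroup.mem_inf] at hu
    obtain ⟨huB, huD⟩ := hu
    refine mem_normalizer_sup ?_ ?_ ?_ ?_
    · exact fun x hx => conj_mem_of_normal hAB (hH.2.2 i).2.1 huB hx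
    · intro x hx
      rw [Subgroup.mem_inf] at hx ⊢
      obtain ⟨hxB, hxC⟩ := hx
      exact ⟨mul_mem (mul_mem huB hxB) (inv_mem huB),
        conj_mem_of_normal hCD (hK.2.2 j).2.1 huD hxC⟩
    · intro x hx
      have := conj_mem_of_normal hAB (hH.2.2 i).2.1 ((H i.succ).inv_mem huB) hx
      simpa using this
    · intro x hx
      rw [Subgroup.mem_inf] at hx ⊢
      obtain ⟨hxB, hxC⟩ := hx
      constructor
      · have := mul_mem (mul_mem ((H i.succ).inv_mem huB) hxB) huB
        exact this
      · have := conj_mem_of_normal hCD (hK.2.2 j).2.1 ((K j.succ).inv_mem huD) hxC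
        simpa using this
  refine normal_of_conj fun b hb x hx => ?_
  exact (Subgroup.mem_normalizer_iff.1 (key hb) x).1 hx

lemma F_values (hH : IsCompositionSeries H) (hK : IsCompositionSeries K) (i : Fin n) :
    ∀ j, F H K i j = H i.castSucc ∨ F H K i j = H i.succ := by
  intro j
  induction j using Fin.reverseInduction with
  | last => exact Or.inr (F_last hH hK i)
  | cast j ih =>
    rcases ih with h | h
    · left
      refine le_antisymm ?_ le_sup_left
      exact le_trans (F_mono hK i (le_of_lt (Fin.castSucc_lt_succ (i := j)))) (le_of_eq h)
    · have hn : ((F H K i j.castSucc).subgroupOf (H i.succ)).Normal := by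
        have := F_normal_step hH hK i j
        rwa [h] at this
      have hle : F H K i j.castSucc ≤ H i.succ := by
        rw [← h]
        exact F_mono hK i (le_of_lt (Fin.castSucc_lt_succ (i := j)))
      exact (hH.2.2 i).2.2 _ hle hn le_sup_left

lemma Fc_eq_iff (i j : Fin n) :
    F H K i j.castSucc = H i.castSucc ↔ H i.succ ⊓ K j.castSucc ≤ H i.castSucc := sup_eq_left

lemma jump_exists (hH : IsCompositionSeries H) (hK : IsCompositionSeries K) (i : Fin n) :
    ∃ j : Fin n, Jump H K i j := by
  by_contra hc
  push_neg at hc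
  have hall : ∀ j, F H K i j = H i.castSucc := by
    intro j
    induction j using Fin.induction with
    | zero => exact F_zero hK i
    | succ j ih =>
      rcases F_values hH hK i j.succ with h | h
      · exact h
      · exact absurd ⟨(Fc_eq_iff i j).1 ih, h⟩ (hc j)
  have := hall (Fin.last n)
  rw [F_last hH hK i] at this
  exact absurd this.symm (ne_of_lt (hH.2.2 i).1)

lemma jump_unique (hH : IsCompositionSeries H) (hK : IsCompositionSeries K) {i : Fin n}
    {j j' : Fin n} (h : Jump H K i j) (h' : Jump H K i j') : j = j' := by
  have key : ∀ j j' : Fin n, Jump H K i j → Jump H K i j' → ¬(j < j') := by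
    intro j j' h h' hlt
    have h1 : F H K i j.succ = H i.succ := h.2
    have h2 : F H K i j'.castSucc = H i.castSucc := (Fc_eq_iff i j').2 h'.1
    have : H i.succ ≤ H i.castSucc := by
      rw [← h1, ← h2]
      exact F_mono hK i (Fin.succ_le_castSucc_iff.2 hlt)
    exact absurd this (hH.2.2 i).1.not_ge
  rcases lt_trichotomy j j' with hlt | he | hlt
  · exact absurd hlt (key j j' h h')
  · exact he
  · exact absurd hlt (key j' j h' h)

lemma flat_iff (hH : IsCompositionSeries H) (hK : IsCompositionSeries K) (i j : Fin n) :
    F H K i j.castSucc = F H K i j.succ ↔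
      H i.succ ⊓ K j.succ ≤
        (H i.castSucc ⊓ K j.succ) ⊔ (H i.succ ⊓ K j.castSucc) := by
  have hAB : H i.castSucc ≤ H i.succ := le_of_lt (hH.2.2 i).1
  have hCD : K j.castSucc ≤ K j.succ := le_of_lt (hK.2.2 j).1
  constructor
  · intro heq
    intro x hx
    have hx1 : x ∈ F H K i j.castSucc := by
      rw [heq]
      exact (le_sup_right : H i.succ ⊓ K j.succ ≤ _) hx
    obtain ⟨a, ha, u, hu, hau⟩ :=
      mem_sup_decomp hAB (hH.2.2 i).2.1 inf_le_left hx1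
    rw [Subgroup.mem_inf] at hu hx
    have haD : a ∈ K j.succ := by
      have he : a = x * u⁻¹ := by rw [← hau]; group
      rw [he]
      exact mul_mem hx.2 ((K j.succ).inv_mem (hCD hu.2))
    rw [← hau]
    exact mul_mem ((le_sup_left : H i.castSucc ⊓ K j.succ ≤ _ ⊔ (H i.succ ⊓ K j.castSucc)) (Subgroup.mem_inf.2 ⟨ha, haD⟩)) ((le_sup_right : H i.succ ⊓ K j.castSucc ≤ (H i.castSucc ⊓ K j.succ) ⊔ _) (Subgroup.mem_inf.2 hu))
  · intro hmid
    refine le_antisymm (F_mono hK i (le_of_lt (Fin.castSucc_lt_succ (i := j)))) ?_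
    refine sup_le le_sup_left ?_
    refine le_trans hmid ?_
    exact sup_le (le_trans inf_le_left le_sup_left) le_sup_right

lemma jump_iff_not_flat (hH : IsCompositionSeries H) (hK : IsCompositionSeries K) (i j : Fin n) :
    Jump H K i j ↔ ¬(F H K i j.castSucc = F H K i j.succ) := by
  constructor
  · intro h heq
    have h1 : F H K i j.castSucc = H i.castSucc := (Fc_eq_iff i j).2 h.1
    have h2 : F H K i j.succ = H i.succ := h.2
    rw [h1, h2] at heq
    exact absurd heq (ne_of_lt (hH.2.2 i).1)
  · intro hne
    rcases F_values hH hK i j.castSucc with h1 | h1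
    · rcases F_values hH hK i j.succ with h2 | h2
      · exact absurd (h1.trans h2.symm) hne
      · exact ⟨(Fc_eq_iff i j).1 h1, h2⟩
    · rcases F_values hH hK i j.succ with h2 | h2
      · have : H i.succ ≤ H i.castSucc := by
          rw [← h1, ← h2]
          exact F_mono hK i (le_of_lt (Fin.castSucc_lt_succ (i := j)))
        exact absurd this (hH.2.2 i).1.not_ge
      · exact absurd (h1.trans h2.symm) hne

lemma jump_symm (hH : IsCompositionSeries H) (hK : IsCompositionSeries K) {i j : Fin n}
    (h : Jump H K i j) : Jump K H j i := by
  rw [jump_iff_not_flat hK hH, flat_iff hK hH]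
  rw [jump_iff_not_flat hH hK, flat_iff hH hK] at h
  intro hc
  apply h
  rw [inf_comm (K j.succ) (H i.castSucc), inf_comm (K j.succ) (H i.succ),
    inf_comm (K j.castSucc) (H i.succ), sup_comm] at hc
  exact hc

lemma jump_downup (hH : IsCompositionSeries H) (hK : IsCompositionSeries K) {i j : Fin n}
    (h : Jump H K i j) :
    SubnormalDownUpProj (H i.castSucc) (H i.succ) (K j.castSucc) (K j.succ) := by
  have h' : Jump K H j i := jump_symm hH hK h
  set A := H i.castSucc
  set B := H i.succ
  set C := K j.castSucc
  set D := K j.succ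
  have hAB : A ≤ B := le_of_lt (hH.2.2 i).1
  have hCD : C ≤ D := le_of_lt (hK.2.2 j).1
  have hNA : (A.subgroupOf B).Normal := (hH.2.2 i).2.1
  have hNC : (C.subgroupOf D).Normal := (hK.2.2 j).2.1
  refine ⟨A ⊓ D, B ⊓ D, ?_, ?_, ?_, ?_, ?_, ?_, ?_, ?_⟩
  case refine_3 => exact inf_le_inf_right D hAB
  case refine_4 =>
    refine normal_of_conj ?_
    intro b hb x hx
    rw [Subgroup.mem_inf] at hb hx ⊢
    exact ⟨conj_mem_of_normal hAB hNA hb.1 hx.1,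
      mul_mem (mul_mem hb.2 hx.2) (inv_mem hb.2)⟩
  case refine_2 => exact isSubnormal_inf_cs hK (isSubnormal_of_cs hH i.succ) j.succ
  case refine_1 =>
    refine IsSubnormal.step (inf_le_inf_right D hAB) ?_
      (isSubnormal_inf_cs hK (isSubnormal_of_cs hH i.succ) j.succ)
    refine normal_of_conj ?_
    intro b hb x hx
    rw [Subgroup.mem_inf] at hb hx ⊢
    exact ⟨conj_mem_of_normal hAB hNA hb.1 hx.1,
      mul_mem (mul_mem hb.2 hx.2) (inv_mem hb.2)⟩
  case refine_5 =>
    rw [mul_eq_sup hAB hNA inf_le_left]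
    exact congrArg _ h.2
  case refine_6 =>
    rw [← inf_assoc, inf_eq_left.2 hAB]
  case refine_7 =>
    rw [mul_eq_sup hCD hNC inf_le_right]
    refine congrArg _ ?_
    rw [inf_comm B D]
    exact h'.2
  case refine_8 =>
    ext x
    simp only [Subgroup.mem_inf]
    constructor
    · rintro ⟨hc, hb, hd⟩
      exact ⟨h.1 ⟨hb, hc⟩, hd⟩
    · rintro ⟨ha, hd⟩
      exact ⟨h'.1 ⟨hd, ha⟩, hAB ha, hd⟩

end Series
end JHAux

/-- for composition series `H`, `K` of `G` of the same length `n`, there is a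
unique permutation `π` of `{1,…,n}` such that `H i / H (i-1)` is subnormally down-and-up
projective to `K (π i) / K (π i - 1)` for all `i`. -/
theorem exists_unique_perm_subnormal_down_up_projective
    {G : Type*} [Group G] {n : ℕ} (H K : Fin (n + 1) → Subgroup G)
    (hH : IsCompositionSeries H) (hK : IsCompositionSeries K) :
    ∃! π : Equiv.Perm (Fin n), ∀ i : Fin n,
      SubnormalDownUpProj (H i.castSucc) (H i.succ) (K (π i).castSucc) (K (π i).succ) := by
  classical
  open JHAux in
  -- the canonical jump maps in both directions
  let p : Fin n → Fin n := fun i => Classical.choose (JHAux.jump_exists hH hK i)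
  have hp : ∀ i, JHAux.Jump H K i (p i) := fun i => Classical.choose_spec (JHAux.jump_exists hH hK i)
  let q : Fin n → Fin n := fun j => Classical.choose (JHAux.jump_exists hK hH j)
  have hq : ∀ j, JHAux.Jump K H j (q j) := fun j => Classical.choose_spec (JHAux.jump_exists hK hH j)
  have hqp : ∀ i, q (p i) = i := by
    intro i
    exact JHAux.jump_unique hK hH (hq (p i)) (JHAux.jump_symm hH hK (hp i))
  have hpq : ∀ j, p (q j) = j := by
    intro j
    exact JHAux.jump_unique hH hK (hp (q j)) (JHAux.jump_symm hK hH (hq j))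
  let π : Equiv.Perm (Fin n) := ⟨p, q, hqp, hpq⟩
  refine ⟨π, ?_, ?_⟩
  · intro i
    exact JHAux.jump_downup hH hK (hp i)
  · intro ρ hρ
    have hle : ∀ i, (p i : ℕ) ≤ (ρ i : ℕ) := by
      intro i
      by_contra hc
      push_neg at hc
      have hlt : ρ i < p i := hc
      obtain ⟨X, Y, _, _, _, _, hAY, _, hCY, _⟩ := hρ i
      have hYB : Y ≤ H i.succ := by
        intro y hy
        have : (y : G) ∈ (↑(H i.succ) : Set G) := by
          rw [← hAY]
          exact ⟨1, (H i.castSucc).one_mem, y, hy, one_mul y⟩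
        exact this
      have hYD : Y ≤ K (ρ i).succ := by
        intro y hy
        have : (y : G) ∈ (↑(K (ρ i).succ) : Set G) := by
          rw [← hCY]
          exact ⟨1, (K (ρ i).castSucc).one_mem, y, hy, one_mul y⟩
        exact this
      have hsup : H i.castSucc ⊔ Y = H i.succ := by
        refine le_antisymm (sup_le (le_of_lt (hH.2.2 i).1) hYB) ?_
        intro x hx
        have : (x : G) ∈ (↑(H i.castSucc) * ↑Y : Set G) := by rw [hAY]; exact hx
        obtain ⟨a, ha, y, hy, rfl⟩ := this
        exact mul_mem ((le_sup_left : H i.castSucc ≤ H i.castSucc ⊔ Y) ha) ((le_sup_right : Y ≤ H i.castSucc ⊔ Y) hy)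
      have hFB : JHAux.F H K i (ρ i).succ = H i.succ := by
        refine le_antisymm (sup_le (le_of_lt (hH.2.2 i).1) inf_le_left) ?_
        rw [← hsup]
        exact sup_le_sup_left (le_inf hYB hYD) _
      have hFA : JHAux.F H K i (p i).castSucc = H i.castSucc :=
        (JHAux.Fc_eq_iff i (p i)).2 (hp i).1
      have : H i.succ ≤ H i.castSucc := by
        rw [← hFB, ← hFA]
        exact JHAux.F_mono hK i (Fin.succ_le_castSucc_iff.2 hlt)
      exact absurd this (hH.2.2 i).1.not_ge
    have hsum : (∑ i : Fin n, (p i : ℕ)) = ∑ i : Fin n, (ρ i : ℕ) := by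
      have e1 : (∑ i : Fin n, ((π i : Fin n) : ℕ)) = ∑ j : Fin n, (j : ℕ) :=
        Equiv.sum_comp π fun j => (j : ℕ)
      have e2 : (∑ i : Fin n, ((ρ i : Fin n) : ℕ)) = ∑ j : Fin n, (j : ℕ) :=
        Equiv.sum_comp ρ fun j => (j : ℕ)
      exact e1.trans e2.symm
    have hpt := (Finset.sum_eq_sum_iff_of_le fun i _ => hle i).1 hsum
    refine Equiv.ext fun i => ?_
    have := hpt i (Finset.mem_univ i)
    exact Fin.ext this.symm
end

section
/- Let G be a group possessing a composition series, and let H and K be any two composition series of G (they have the same length n by the Jordan–Hölder theorem). Then the set CSL(H,K) = {H_i ∩ K_j : 0 ≤ i, j ≤ n}, partially ordered by reverse inclusion ⊇, is a lattice that is slim and semimodular (equivalently, CSL(H,K) under inclusion is a dually slim, dually semimodular lattice). -/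
/-- `p` is join-irreducible: `p ≠ ⊥` and `p = a ⊔ b` implies `p = a` or `p = b`. -/
def JoinIrred {L : Type*} [Lattice L] [OrderBot L] (p : L) : Prop :=
  p ≠ ⊥ ∧ ∀ a b : L, p = a ⊔ b → p = a ∨ p = b

/-- A lattice is slim if its join-irreducible elements contain no three-element antichain. -/
def Slim (L : Type*) [Lattice L] [OrderBot L] : Prop :=
  ¬ ∃ a b c : L, JoinIrred a ∧ JoinIrred b ∧ JoinIrred c ∧
    ¬ a ≤ b ∧ ¬ b ≤ a ∧ ¬ a ≤ c ∧ ¬ c ≤ a ∧ ¬ b ≤ c ∧ ¬ c ≤ b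

/-- A lattice is (upper) semimodular if `a ⊓ b ⋖ a` implies `b ⋖ a ⊔ b`. -/
def Semimodular (L : Type*) [Lattice L] : Prop :=
  ∀ a b : L, a ⊓ b ⋖ a → b ⋖ a ⊔ b

/-- `CSL H K` is the set `{H i ∩ K j}` of subgroups, ordered by inclusion. -/
def CSL {G : Type*} [Group G] {n : ℕ} (H K : Fin (n + 1) → Subgroup G) : Set (Subgroup G) :=
  {A | ∃ i j : Fin (n + 1), A = H i ⊓ K j}

namespace CSLP

variable {G : Type*} [Group G] {n : ℕ} {H K : Fin (n + 1) → Subgroup G}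

lemma csMono (hH : IsCompositionSeries H) : Monotone H :=
  (Fin.strictMono_iff_lt_succ.2 fun i => (hH.2.2 i).1).monotone

/-- elementwise normality of the composition steps -/
lemma csConj (hH : IsCompositionSeries H) (p : Fin n) :
    ∀ y ∈ H p.succ, ∀ x ∈ H p.castSucc, y * x * y⁻¹ ∈ H p.castSucc := by
  intro y hy x hx
  have hxy : x ∈ H p.succ := csMono hH p.castSucc_lt_succ.le hx
  have := (hH.2.2 p).2.1.conj_mem ⟨x, hxy⟩ (Subgroup.mem_subgroupOf.2 hx) ⟨y, hy⟩
  simpa [Subgroup.mem_subgroupOf] using this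

/-- product of a subgroup with a subgroup normalizing it -/
def prodSG (A B : Subgroup G) (hn : ∀ y ∈ B, ∀ x ∈ A, y * x * y⁻¹ ∈ A) : Subgroup G where
  carrier := {z | ∃ a ∈ A, ∃ b ∈ B, z = a * b}
  one_mem' := ⟨1, one_mem _, 1, one_mem _, (one_mul 1).symm⟩
  mul_mem' := by
    rintro x y ⟨a, ha, b, hb, rfl⟩ ⟨c, hc, d, hd, rfl⟩
    exact ⟨a * (b * c * b⁻¹), mul_mem ha (hn b hb c hc), b * d, mul_mem hb hd, by group⟩
  inv_mem' := by
    rintro x ⟨a, ha, b, hb, rfl⟩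
    exact ⟨b⁻¹ * a⁻¹ * b, by simpa using hn b⁻¹ (inv_mem hb) a⁻¹ (inv_mem ha), b⁻¹,
      inv_mem hb, by group⟩

lemma mem_prodSG {A B : Subgroup G} {hn} {z : G} :
    z ∈ prodSG A B hn ↔ ∃ a ∈ A, ∃ b ∈ B, z = a * b := Iff.rfl

variable (K) in
/-- `M p q = (H p) (H (p+1) ⊓ K q)` -/
def Mgrp (hH : IsCompositionSeries H) (p : Fin n) (q : Fin (n + 1)) : Subgroup G :=
  prodSG (H p.castSucc) (H p.succ ⊓ K q)
    (fun y hy x hx => csConj hH p y hy.1 x hx)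

lemma Mgrp_le (hH : IsCompositionSeries H) (p : Fin n) (q : Fin (n + 1)) :
    Mgrp K hH p q ≤ H p.succ := by
  rintro z ⟨a, ha, b, hb, rfl⟩
  exact mul_mem (csMono hH p.castSucc_lt_succ.le ha) hb.1

lemma left_le_Mgrp (hH : IsCompositionSeries H) (p : Fin n) (q : Fin (n + 1)) :
    H p.castSucc ≤ Mgrp K hH p q :=
  fun a ha => ⟨a, ha, 1, one_mem _, (mul_one a).symm⟩

lemma right_le_Mgrp (hH : IsCompositionSeries H) (p : Fin n) (q : Fin (n + 1)) :
    H p.succ ⊓ K q ≤ Mgrp K hH p q :=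
  fun b hb => ⟨1, one_mem _, b, hb, (one_mul b).symm⟩

lemma Mgrp_eq_sup (hH : IsCompositionSeries H) (p : Fin n) (q : Fin (n + 1)) :
    Mgrp K hH p q = H p.castSucc ⊔ (H p.succ ⊓ K q) := by
  refine le_antisymm ?_ (sup_le (left_le_Mgrp hH p q) (right_le_Mgrp hH p q))
  rintro z ⟨a, ha, b, hb, rfl⟩
  exact Subgroup.mul_mem_sup ha hb

lemma Mgrp_mono (hH : IsCompositionSeries H) (hK : IsCompositionSeries K) (p : Fin n) {q q' : Fin (n + 1)} (h : q ≤ q') :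
    Mgrp K hH p q ≤ Mgrp K hH p q' := by
  rintro z ⟨a, ha, b, hb, rfl⟩
  exact ⟨a, ha, b, ⟨hb.1, csMono hK h hb.2⟩, rfl⟩
lemma Mgrp_last (hH : IsCompositionSeries H) (hK : IsCompositionSeries K) (p : Fin n) :
    Mgrp K hH p (Fin.last n) = H p.succ := by
  refine le_antisymm (Mgrp_le hH p _) fun x hx => ?_
  exact ⟨1, one_mem _, x, ⟨hx, by rw [hK.2.1]; trivial⟩, (one_mul x).symm⟩

/-- Zassenhaus-style relative normality: `M p q ◁ M p (q+1)` -/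
lemma Mgrp_normal_step (hH : IsCompositionSeries H) (hK : IsCompositionSeries K)
    (p : Fin n) (q : Fin n) :
    ∀ x ∈ Mgrp K hH p q.succ, ∀ m ∈ Mgrp K hH p q.castSucc,
      x * m * x⁻¹ ∈ Mgrp K hH p q.castSucc := by
  rintro x ⟨h, hh, k, hk, rfl⟩ m ⟨h', hh', k', hk', rfl⟩
  have hkH : k ∈ H p.succ := hk.1
  have h1 : k * h' * k⁻¹ ∈ H p.castSucc := csConj hH p k hkH h' hh'
  have hkinv : k⁻¹ ∈ H p.succ := inv_mem hkH
  have h2 : k * k' * k⁻¹ ∈ H p.succ ⊓ K q.castSucc := by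
    rw [Subgroup.mem_inf]
    exact ⟨mul_mem (mul_mem hkH hk'.1) hkinv, csConj hK q k hk.2 k' hk'.2⟩
  -- (h k) (h' k') (h k)⁻¹ = h * (k h' k⁻¹) * (k k' k⁻¹) * h⁻¹
  have key : (h * k) * (h' * k') * (h * k)⁻¹
      = h * (k * h' * k⁻¹) * ((k * k' * k⁻¹) * h⁻¹ * (k * k' * k⁻¹)⁻¹) * (k * k' * k⁻¹) := by
    group
  rw [key]
  refine ⟨h * (k * h' * k⁻¹) * ((k * k' * k⁻¹) * h⁻¹ * (k * k' * k⁻¹)⁻¹), ?_, _, h2, rfl⟩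
  exact mul_mem (mul_mem hh h1) (csConj hH p _ h2.1 h⁻¹ (inv_mem hh))

/-- Lemma A : dichotomy -/
lemma Mgrp_dichotomy (hH : IsCompositionSeries H) (hK : IsCompositionSeries K)
    (p : Fin n) (q : Fin (n + 1)) :
    Mgrp K hH p q = H p.castSucc ∨ Mgrp K hH p q = H p.succ := by
  induction q using Fin.reverseInduction with
  | last => exact Or.inr (Mgrp_last hH hK p)
  | cast q ih =>
    rcases ih with h | h
    · left
      refine le_antisymm ?_ (left_le_Mgrp hH p _)
      calc Mgrp K hH p q.castSucc ≤ Mgrp K hH p q.succ :=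
            Mgrp_mono hH hK p q.castSucc_lt_succ.le
        _ = H p.castSucc := h
    · -- M (q+1) = H p.succ, so M q is normal in H p.succ; use maximality
      have hnorm : ((Mgrp K hH p q.castSucc).subgroupOf (H p.succ)).Normal := by
        constructor
        intro m hm g
        have hg : (g : G) ∈ Mgrp K hH p q.succ := by rw [h]; exact g.2
        have := Mgrp_normal_step hH hK p q (g : G) hg (m : G) (Subgroup.mem_subgroupOf.1 hm)
        simpa [Subgroup.mem_subgroupOf] using this
      exact (hH.2.2 p).2.2 _ (Mgrp_le hH p _) hnorm (left_le_Mgrp hH p _)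

variable (H K) in
/-- the horizontal edge `(p,q) -- (p+1,q)` is an equality -/
def Ed (p : Fin n) (q : Fin (n + 1)) : Prop := H p.succ ⊓ K q ≤ H p.castSucc

lemma Mgrp_eq_of_Ed (hH : IsCompositionSeries H) {p : Fin n} {q : Fin (n + 1)}
    (h : Ed H K p q) : Mgrp K hH p q = H p.castSucc := by
  refine le_antisymm ?_ (left_le_Mgrp hH p q)
  rintro z ⟨a, ha, b, hb, rfl⟩
  exact mul_mem ha (h hb)

lemma not_Ed_iff (hH : IsCompositionSeries H) (hK : IsCompositionSeries K)
    {p : Fin n} {q : Fin (n + 1)} :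
    ¬ Ed H K p q ↔ Mgrp K hH p q = H p.succ := by
  constructor
  · intro h
    rcases Mgrp_dichotomy hH hK p q with h' | h'
    · exact absurd (fun x hx => h' ▸ right_le_Mgrp hH p q hx) h
    · exact h'
  · intro h hE
    have := Mgrp_eq_of_Ed (K := K) hH hE
    exact (hH.2.2 p).1.ne (this.symm.trans h)

lemma Ed_zero (hH : IsCompositionSeries H) (hK : IsCompositionSeries K) (p : Fin n) :
    Ed H K p 0 := by
  intro x hx
  have : x ∈ K 0 := hx.2
  rw [hK.1] at this
  simp only [Subgroup.mem_bot] at this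
  simp [this, one_mem]

lemma not_Ed_last (hH : IsCompositionSeries H) (hK : IsCompositionSeries K) (p : Fin n) :
    ¬ Ed H K p (Fin.last n) := by
  intro h
  have : H p.succ ≤ H p.castSucc := by
    intro x hx
    exact h ⟨hx, by rw [hK.2.1]; trivial⟩
  exact (hH.2.2 p).1.not_ge this

lemma not_Ed_mono (hH : IsCompositionSeries H) (hK : IsCompositionSeries K)
    {p : Fin n} {q q' : Fin (n + 1)} (hq : q ≤ q') (h : ¬ Ed H K p q) : ¬ Ed H K p q' := by
  rw [not_Ed_iff hH hK] at h ⊢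
  exact le_antisymm (Mgrp_le hH p q') (h ▸ Mgrp_mono hH hK p hq)

lemma Ed_mono (hH : IsCompositionSeries H) (hK : IsCompositionSeries K)
    {p : Fin n} {q q' : Fin (n + 1)} (hq : q ≤ q') (h : Ed H K p q') : Ed H K p q := by
  by_contra hc
  exact not_Ed_mono hH hK hq hc h

variable (H K) in
/-- `D p q` : the transition of the `p`-th H-step happens at `q` -/
def Dd (p q : Fin n) : Prop := Ed H K p q.castSucc ∧ ¬ Ed H K p q.succ
lemma Dd_iff_notT (hH : IsCompositionSeries H) (hK : IsCompositionSeries K) {p q : Fin n} :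
    Dd H K p q ↔
      ¬ (H p.succ ⊓ K q.succ ≤ (H p.castSucc ⊓ K q.succ) ⊔ (H p.succ ⊓ K q.castSucc)) := by
  constructor
  · rintro ⟨hE, hnE⟩ hT
    have hMc : Mgrp K hH p q.castSucc = H p.castSucc := Mgrp_eq_of_Ed hH hE
    refine hnE fun x hx => ?_
    have hsup : (H p.castSucc ⊓ K q.succ) ⊔ (H p.succ ⊓ K q.castSucc) ≤ H p.castSucc := by
      refine sup_le inf_le_left ?_
      rw [← hMc]
      exact right_le_Mgrp hH p q.castSucc
    exact hsup (hT hx)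
  · intro hnT
    constructor
    · by_contra hnE
      refine hnT fun x hx => ?_
      have hx1 : x ∈ Mgrp K hH p q.castSucc := by
        rw [(not_Ed_iff hH hK).1 hnE]
        exact (Subgroup.mem_inf.1 hx).1
      obtain ⟨a, ha, b, hb, rfl⟩ := hx1
      have hbK : b ∈ K q.succ := csMono hK q.castSucc_lt_succ.le (Subgroup.mem_inf.1 hb).2
      have haK : a ∈ K q.succ := by
        have : a * b * b⁻¹ ∈ K q.succ := mul_mem (Subgroup.mem_inf.1 hx).2 (inv_mem hbK)
        simpa using this
      exact Subgroup.mul_mem_sup (Subgroup.mem_inf.2 ⟨ha, haK⟩) hb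
    · intro hE
      refine hnT fun x hx => ?_
      have := Subgroup.mem_inf.1 hx
      have : x ∈ H p.castSucc ⊓ K q.succ := Subgroup.mem_inf.2 ⟨hE hx, this.2⟩
      exact Subgroup.mem_sup_left this

lemma swap_le_helper {A B C D E F : Subgroup G} :
    (A ⊓ B ≤ (C ⊓ D) ⊔ (E ⊓ F)) ↔ (B ⊓ A ≤ (F ⊓ E) ⊔ (D ⊓ C)) := by
  rw [inf_comm B A, inf_comm F E, inf_comm D C, sup_comm]

/-- butterfly duality -/
lemma Dd_swap (hH : IsCompositionSeries H) (hK : IsCompositionSeries K) {p q : Fin n} :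
    Dd H K p q ↔ Dd K H q p := by
  rw [Dd_iff_notT hH hK, Dd_iff_notT hK hH]
  exact not_congr swap_le_helper
section Counting
open Finset
open scoped Classical

variable (H K) in
/-- number of strict horizontal steps on the path `(0,j) → (i,j)` -/
noncomputable def ell (i j : Fin (n + 1)) : ℕ :=
  (univ.filter fun p : Fin n => (p : ℕ) < (i : ℕ) ∧ ¬ Ed H K p j).card

lemma exists_D_of_notE (hH : IsCompositionSeries H) (hK : IsCompositionSeries K)
    {p : Fin n} {j : Fin (n + 1)} (h : ¬ Ed H K p j) :
    ∃ q : Fin n, (q : ℕ) < (j : ℕ) ∧ Dd H K p q := by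
  induction j using Fin.induction with
  | zero => exact absurd (Ed_zero hH hK p) h
  | succ q ih =>
    by_cases hq : Ed H K p q.castSucc
    · exact ⟨q, by simp, hq, h⟩
    · obtain ⟨q', h1, h2⟩ := ih hq
      refine ⟨q', ?_, h2⟩
      simp only [Fin.coe_castSucc] at h1
      simp only [Fin.val_succ]
      omega

lemma notE_of_D (hH : IsCompositionSeries H) (hK : IsCompositionSeries K)
    {p q : Fin n} {j : Fin (n + 1)} (hD : Dd H K p q) (hj : (q : ℕ) < (j : ℕ)) :
    ¬ Ed H K p j := by
  refine not_Ed_mono hH hK ?_ hD.2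
  rw [Fin.le_def]
  simp only [Fin.val_succ]
  omega

lemma D_unique (hH : IsCompositionSeries H) (hK : IsCompositionSeries K)
    {p q q' : Fin n} (h : Dd H K p q) (h' : Dd H K p q') : q = q' := by
  rcases lt_trichotomy (q : ℕ) (q' : ℕ) with hlt | heq | hgt
  · exact absurd h'.1 (notE_of_D hH hK h (by simp only [Fin.coe_castSucc]; omega))
  · exact Fin.ext heq
  · exact absurd h.1 (notE_of_D hH hK h' (by simp only [Fin.coe_castSucc]; omega)).elim
  
lemma card_slice (hH : IsCompositionSeries H) (hK : IsCompositionSeries K)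
    (i : Fin (n + 1)) (q : Fin n) :
    (univ.filter fun p : Fin n => (p : ℕ) < (i : ℕ) ∧ Dd H K p q).card
      = if Ed K H q i then 0 else 1 := by
  have hcongr : (univ.filter fun p : Fin n => (p : ℕ) < (i : ℕ) ∧ Dd H K p q)
      = univ.filter fun p : Fin n => (p : ℕ) < (i : ℕ) ∧ Dd K H q p := by
    apply filter_congr
    intro p _
    rw [Dd_swap hH hK]
  rw [hcongr]
  by_cases hE : Ed K H q i
  · rw [if_pos hE]
    rw [Finset.card_eq_zero, Finset.filter_eq_empty_iff]
    rintro p _ ⟨hlt, hD⟩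
    exact notE_of_D hK hH hD hlt hE
  · rw [if_neg hE]
    obtain ⟨p0, hlt, hD⟩ := exists_D_of_notE hK hH hE
    refine le_antisymm (Finset.card_le_one.2 ?_) (Finset.card_pos.2 ⟨p0, ?_⟩)
    · intro a ha b hb
      simp only [mem_filter] at ha hb
      exact D_unique hK hH ha.2.2 hb.2.2
    · simp only [mem_filter]
      exact ⟨mem_univ _, hlt, hD⟩

/-- horizontal slice decomposition -/
lemma ell_split_fst (u' u v : Fin (n + 1)) (h : u' ≤ u) :
    ell H K u v = ell H K u' v
      + (univ.filter fun p : Fin n =>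
          (u' : ℕ) ≤ (p : ℕ) ∧ (p : ℕ) < (u : ℕ) ∧ ¬ Ed H K p v).card := by
  rw [ell, ell, ← Finset.card_union_of_disjoint]
  · congr 1
    ext p
    simp only [mem_filter, mem_union, mem_univ, true_and]
    rw [Fin.le_def] at h
    constructor
    · rintro ⟨hlt, hC⟩
      by_cases hp : (p : ℕ) < (u' : ℕ)
      · exact Or.inl ⟨hp, hC⟩
      · exact Or.inr ⟨by omega, hlt, hC⟩
    · rintro (⟨hlt, hC⟩ | ⟨_, hlt, hC⟩) <;> exact ⟨by omega, hC⟩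
  · rw [Finset.disjoint_filter]
    rintro p _ ⟨hlt, _⟩ ⟨hge, _, _⟩
    omega

/-- vertical single step -/
lemma ell_vstep (hH : IsCompositionSeries H) (hK : IsCompositionSeries K)
    (x : Fin (n + 1)) (q : Fin n) :
    ell H K x q.succ = ell H K x q.castSucc + (if Ed K H q x then 0 else 1) := by
  rw [← card_slice hH hK x q, ell, ell, ← Finset.card_union_of_disjoint]
  · congr 1
    ext p
    simp only [mem_filter, mem_union, mem_univ, true_and]
    constructor
    · rintro ⟨hlt, hC⟩
      by_cases hp : Ed H K p q.castSucc
      · exact Or.inr ⟨hlt, hp, hC⟩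
      · exact Or.inl ⟨hlt, hp⟩
    · rintro (⟨hlt, hC⟩ | ⟨hlt, hD⟩)
      · exact ⟨hlt, not_Ed_mono hH hK q.castSucc_lt_succ.le hC⟩
      · exact ⟨hlt, hD.2⟩
  · rw [Finset.disjoint_filter]
    rintro p _ ⟨_, hC⟩ ⟨_, hD, _⟩
    exact hC hD

/-- vertical slice decomposition -/
lemma ell_split_snd (hH : IsCompositionSeries H) (hK : IsCompositionSeries K)
    (x : Fin (n + 1)) {b c : Fin (n + 1)} (h : b ≤ c) :
    ell H K x c = ell H K x b
      + (univ.filter fun q : Fin n =>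
          (b : ℕ) ≤ (q : ℕ) ∧ (q : ℕ) < (c : ℕ) ∧ ¬ Ed K H q x).card := by
  induction c using Fin.induction with
  | zero =>
    have hb : b = 0 := le_antisymm h (Fin.zero_le b)
    subst hb
    simp
  | succ q ih =>
    by_cases hb : b ≤ q.castSucc
    · rw [ell_vstep hH hK x q, ih hb]
      have hsplit : (univ.filter fun q' : Fin n =>
            (b : ℕ) ≤ (q' : ℕ) ∧ (q' : ℕ) < ((q.succ : Fin (n+1)) : ℕ) ∧ ¬ Ed K H q' x)
          = (univ.filter fun q' : Fin n =>
            (b : ℕ) ≤ (q' : ℕ) ∧ (q' : ℕ) < ((q.castSucc : Fin (n+1)) : ℕ) ∧ ¬ Ed K H q' x)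
            ∪ (univ.filter fun q' : Fin n => q' = q ∧ ¬ Ed K H q' x) := by
        ext q'
        simp only [mem_filter, mem_union, mem_univ, true_and, Fin.val_succ, Fin.coe_castSucc]
        rw [Fin.le_def] at hb
        simp only [Fin.coe_castSucc] at hb
        constructor
        · rintro ⟨h1, h2, hC⟩
          by_cases hq' : (q' : ℕ) < (q : ℕ)
          · exact Or.inl ⟨h1, hq', hC⟩
          · have : q' = q := Fin.ext (by omega)
            exact Or.inr ⟨this, hC⟩
        · rintro (⟨h1, h2, hC⟩ | ⟨rfl, hC⟩)
          · exact ⟨h1, by omega, hC⟩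
          · exact ⟨by omega, by omega, hC⟩
      have hdisj : Disjoint (univ.filter fun q' : Fin n =>
            (b : ℕ) ≤ (q' : ℕ) ∧ (q' : ℕ) < ((q.castSucc : Fin (n+1)) : ℕ) ∧ ¬ Ed K H q' x)
          (univ.filter fun q' : Fin n => q' = q ∧ ¬ Ed K H q' x) := by
        rw [Finset.disjoint_filter]
        rintro q' _ ⟨_, h2, _⟩ ⟨rfl, _⟩
        simp only [Fin.coe_castSucc] at h2
        omega
      rw [hsplit, Finset.card_union_of_disjoint hdisj]
      have hlast : (univ.filter fun q' : Fin n => q' = q ∧ ¬ Ed K H q' x).card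
          = (if Ed K H q x then 0 else 1) := by
        by_cases hE : Ed K H q x
        · rw [if_pos hE, Finset.card_eq_zero, Finset.filter_eq_empty_iff]
          rintro q' _ ⟨rfl, hC⟩
          exact hC hE
        · rw [if_neg hE]
          have : (univ.filter fun q' : Fin n => q' = q ∧ ¬ Ed K H q' x) = {q} := by
            ext q'
            simp only [mem_filter, mem_univ, true_and, mem_singleton]
            constructor
            · rintro ⟨rfl, _⟩; rfl
            · rintro rfl; exact ⟨rfl, hE⟩
          rw [this, Finset.card_singleton]
      rw [hlast]
      ring
    · have hbeq : b = q.succ := by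
        rw [Fin.le_def] at h hb
        apply Fin.ext
        simp only [Fin.val_succ] at h ⊢
        simp only [Fin.coe_castSucc] at hb
        omega
      subst hbeq
      have : (univ.filter fun q' : Fin n =>
          ((q.succ : Fin (n+1)) : ℕ) ≤ (q' : ℕ) ∧ (q' : ℕ) < ((q.succ : Fin (n+1)) : ℕ)
            ∧ ¬ Ed K H q' x) = ∅ := by
        rw [Finset.filter_eq_empty_iff]
        rintro q' _ ⟨h1, h2, _⟩
        omega
      rw [this]
      simp

end Counting
section Counting2
open Finset
open scoped Classical

lemma ell_hstep (hH : IsCompositionSeries H) (hK : IsCompositionSeries K)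
    (p : Fin n) (b : Fin (n + 1)) :
    ell H K p.succ b = ell H K p.castSucc b + (if Ed H K p b then 0 else 1) := by
  rw [ell_split_fst p.castSucc p.succ b p.castSucc_lt_succ.le]
  congr 1
  have hset : (univ.filter fun p' : Fin n =>
        ((p.castSucc : Fin (n+1)) : ℕ) ≤ (p' : ℕ) ∧ (p' : ℕ) < ((p.succ : Fin (n+1)) : ℕ)
          ∧ ¬ Ed H K p' b)
      = univ.filter fun p' : Fin n => p' = p ∧ ¬ Ed H K p' b := by
    ext p'
    simp only [mem_filter, mem_univ, true_and, Fin.val_succ, Fin.coe_castSucc]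
    constructor
    · rintro ⟨h1, h2, hC⟩
      exact ⟨Fin.ext (by omega), hC⟩
    · rintro ⟨rfl, hC⟩
      exact ⟨le_rfl, by omega, hC⟩
  rw [hset]
  by_cases hE : Ed H K p b
  · rw [if_pos hE, Finset.card_eq_zero, Finset.filter_eq_empty_iff]
    rintro p' _ ⟨rfl, hC⟩
    exact hC hE
  · rw [if_neg hE]
    have : (univ.filter fun p' : Fin n => p' = p ∧ ¬ Ed H K p' b) = {p} := by
      ext p'
      simp only [mem_filter, mem_univ, true_and, mem_singleton]
      exact ⟨fun h => h.1, fun h => ⟨h, h ▸ hE⟩⟩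
    rw [this, Finset.card_singleton]

lemma ell_mono_fst {i i' : Fin (n + 1)} (h : i ≤ i') (j : Fin (n + 1)) :
    ell H K i j ≤ ell H K i' j := by
  rw [ell_split_fst i i' j h]
  exact Nat.le_add_right _ _

lemma ell_mono_snd (hH : IsCompositionSeries H) (hK : IsCompositionSeries K)
    (x : Fin (n + 1)) {b c : Fin (n + 1)} (h : b ≤ c) :
    ell H K x b ≤ ell H K x c := by
  rw [ell_split_snd hH hK x h]
  exact Nat.le_add_right _ _

/-- the core inequality for lower semimodularity -/
lemma core_ineq (hH : IsCompositionSeries H) (hK : IsCompositionSeries K)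
    {u' v' u v i j : Fin (n + 1)} (h1 : u' ≤ u) (h2 : v' ≤ v) (hi : i ≤ u) (hj : j ≤ v)
    (hcov : ell H K u v = ell H K u' v' + 1) :
    ell H K i j ≤ ell H K (min i u') (min j v') + 1 := by
  set dH := (univ.filter fun p : Fin n =>
      (u' : ℕ) ≤ (p : ℕ) ∧ (p : ℕ) < (u : ℕ) ∧ ¬ Ed H K p v).card with hdH
  set dK := (univ.filter fun q : Fin n =>
      (v' : ℕ) ≤ (q : ℕ) ∧ (q : ℕ) < (v : ℕ) ∧ ¬ Ed K H q u').card with hdK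
  have s1 : ell H K u v = ell H K u' v + dH := ell_split_fst u' u v h1
  have s2 : ell H K u' v = ell H K u' v' + dK := ell_split_snd hH hK u' h2
  have hsum : dH + dK = 1 := by omega
  have hminv : ((min i u' : Fin (n + 1)) : ℕ) = min (i : ℕ) (u' : ℕ) := rfl
  have hminv2 : ((min j v' : Fin (n + 1)) : ℕ) = min (j : ℕ) (v' : ℕ) := rfl
  have t1 : ell H K i j ≤ ell H K (min i u') j + dH := by
    rw [ell_split_fst (min i u') i j (min_le_left i u')]
    refine Nat.add_le_add_left (Finset.card_le_card ?_) _
    intro p hp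
    simp only [mem_filter, mem_univ, true_and, hminv] at hp ⊢
    obtain ⟨hp1, hp2, hC⟩ := hp
    rw [Fin.le_def] at hi hj
    refine ⟨by omega, by omega, not_Ed_mono hH hK (Fin.le_def.2 (by omega)) hC⟩
  have t2 : ell H K (min i u') j ≤ ell H K (min i u') (min j v') + dK := by
    rw [ell_split_snd hH hK (min i u') (min_le_left j v')]
    refine Nat.add_le_add_left (Finset.card_le_card ?_) _
    intro q hq
    simp only [mem_filter, mem_univ, true_and, hminv2] at hq ⊢
    obtain ⟨hq1, hq2, hC⟩ := hq
    rw [Fin.le_def] at hi hj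
    refine ⟨by omega, by omega, ?_⟩
    intro hE
    exact hC (Ed_mono hK hH (Fin.le_def.2 (by rw [hminv]; omega)) hE)
  omega

end Counting2
section Xlemmas
open scoped Classical

variable (H K) in
/-- the grid of subgroups -/
def Xg (i j : Fin (n + 1)) : Subgroup G := H i ⊓ K j

lemma Xg_mono (hH : IsCompositionSeries H) (hK : IsCompositionSeries K)
    {a b i j : Fin (n + 1)} (hai : a ≤ i) (hbj : b ≤ j) : Xg H K a b ≤ Xg H K i j :=
  inf_le_inf (csMono hH hai) (csMono hK hbj)

lemma Xg_hstep (hH : IsCompositionSeries H) (hK : IsCompositionSeries K)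
    (p : Fin n) (b : Fin (n + 1)) :
    Xg H K p.castSucc b = Xg H K p.succ b ↔ Ed H K p b := by
  constructor
  · intro h x hx
    have : x ∈ Xg H K p.succ b := Subgroup.mem_inf.2 ⟨(Subgroup.mem_inf.1 hx).1,
      (Subgroup.mem_inf.1 hx).2⟩
    rw [← h] at this
    exact (Subgroup.mem_inf.1 this).1
  · intro hE
    refine le_antisymm (Xg_mono hH hK p.castSucc_lt_succ.le le_rfl) fun x hx => ?_
    have hx' := Subgroup.mem_inf.1 hx
    exact Subgroup.mem_inf.2 ⟨hE hx, hx'.2⟩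

lemma Xg_vstep (hH : IsCompositionSeries H) (hK : IsCompositionSeries K)
    (i : Fin (n + 1)) (q : Fin n) :
    Xg H K i q.castSucc = Xg H K i q.succ ↔ Ed K H q i := by
  constructor
  · intro h x hx
    have hx' := Subgroup.mem_inf.1 hx
    have : x ∈ Xg H K i q.succ := Subgroup.mem_inf.2 ⟨hx'.2, hx'.1⟩
    rw [← h] at this
    exact (Subgroup.mem_inf.1 this).2
  · intro hE
    refine le_antisymm (Xg_mono hH hK le_rfl q.castSucc_lt_succ.le) fun x hx => ?_
    have hx' := Subgroup.mem_inf.1 hx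
    exact Subgroup.mem_inf.2 ⟨hx'.1, hE (Subgroup.mem_inf.2 ⟨hx'.2, hx'.1⟩)⟩

lemma lemH (hH : IsCompositionSeries H) (hK : IsCompositionSeries K)
    {a i : Fin (n + 1)} (hai : a ≤ i) (b : Fin (n + 1)) :
    Xg H K a b = Xg H K i b ↔ ell H K a b = ell H K i b := by
  induction i using Fin.induction with
  | zero =>
    have : a = 0 := le_antisymm hai (Fin.zero_le a)
    subst this
    simp
  | succ p ih =>
    by_cases hap : a ≤ p.castSucc
    · have hstep := ell_hstep hH hK p b
      have hle1 : ell H K a b ≤ ell H K p.castSucc b := ell_mono_fst hap b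
      constructor
      · intro hX
        have e1 : Xg H K a b = Xg H K p.castSucc b := by
          refine le_antisymm (Xg_mono hH hK hap le_rfl) ?_
          rw [hX]
          exact Xg_mono hH hK p.castSucc_lt_succ.le le_rfl
        have e2 : Xg H K p.castSucc b = Xg H K p.succ b := e1.symm.trans hX
        have hE : Ed H K p b := (Xg_hstep hH hK p b).1 e2
        rw [(ih hap).1 e1, hstep, if_pos hE, Nat.add_zero]
      · intro hl
        have hE : Ed H K p b := by
          by_contra hE
          rw [if_neg hE] at hstep
          omega
        rw [if_pos hE] at hstep
        have e1 : Xg H K a b = Xg H K p.castSucc b := (ih hap).2 (by omega)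
        exact e1.trans ((Xg_hstep hH hK p b).2 hE)
    · have : a = p.succ := by
        rw [Fin.le_def] at hai hap
        apply Fin.ext
        simp only [Fin.val_succ] at hai ⊢
        simp only [Fin.coe_castSucc] at hap
        omega
      subst this
      simp
      
lemma lemV (hH : IsCompositionSeries H) (hK : IsCompositionSeries K)
    (a : Fin (n + 1)) {b j : Fin (n + 1)} (hbj : b ≤ j) :
    Xg H K a b = Xg H K a j ↔ ell H K a b = ell H K a j := by
  induction j using Fin.induction with
  | zero =>
    have : b = 0 := le_antisymm hbj (Fin.zero_le b)
    subst this
    simp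
  | succ q ih =>
    by_cases hbq : b ≤ q.castSucc
    · have hstep := ell_vstep hH hK a q
      have hle1 : ell H K a b ≤ ell H K a q.castSucc := ell_mono_snd hH hK a hbq
      constructor
      · intro hX
        have e1 : Xg H K a b = Xg H K a q.castSucc := by
          refine le_antisymm (Xg_mono hH hK le_rfl hbq) ?_
          rw [hX]
          exact Xg_mono hH hK le_rfl q.castSucc_lt_succ.le
        have e2 : Xg H K a q.castSucc = Xg H K a q.succ := e1.symm.trans hX
        have hE : Ed K H q a := (Xg_vstep hH hK a q).1 e2
        rw [(ih hbq).1 e1, hstep, if_pos hE, Nat.add_zero]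
      · intro hl
        have hE : Ed K H q a := by
          by_contra hE
          rw [if_neg hE] at hstep
          omega
        rw [if_pos hE] at hstep
        have e1 : Xg H K a b = Xg H K a q.castSucc := (ih hbq).2 (by omega)
        exact e1.trans ((Xg_vstep hH hK a q).2 hE)
    · have : b = q.succ := by
        rw [Fin.le_def] at hbj hbq
        apply Fin.ext
        simp only [Fin.val_succ] at hbj ⊢
        simp only [Fin.coe_castSucc] at hbq
        omega
      subst this
      simp

lemma Xg_eq_iff_ell (hH : IsCompositionSeries H) (hK : IsCompositionSeries K)
    {a b i j : Fin (n + 1)} (hai : a ≤ i) (hbj : b ≤ j) :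
    Xg H K a b = Xg H K i j ↔ ell H K a b = ell H K i j := by
  have l1 : ell H K a b ≤ ell H K a j := ell_mono_snd hH hK a hbj
  have l2 : ell H K a j ≤ ell H K i j := ell_mono_fst hai j
  constructor
  · intro hX
    have e1 : Xg H K a b = Xg H K a j := by
      refine le_antisymm (Xg_mono hH hK le_rfl hbj) ?_
      rw [hX]
      exact Xg_mono hH hK hai le_rfl
    have e2 : Xg H K a j = Xg H K i j := e1.symm.trans hX
    rw [(lemV hH hK a hbj).1 e1, (lemH hH hK hai j).1 e2]
  · intro hl
    have e1 : Xg H K a b = Xg H K a j := (lemV hH hK a hbj).2 (by omega)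
    have e2 : Xg H K a j = Xg H K i j := (lemH hH hK hai j).2 (by omega)
    exact e1.trans e2

lemma H_min (hH : IsCompositionSeries H) (a i : Fin (n + 1)) :
    H (min a i) = H a ⊓ H i := by
  rcases le_total a i with h | h
  · rw [min_eq_left h, (inf_eq_left (a := H a)).2 (csMono hH h)]
  · rw [min_eq_right h, (inf_eq_right (b := H i)).2 (csMono hH h)]

lemma Xg_inf (hH : IsCompositionSeries H) (hK : IsCompositionSeries K)
    (a b i j : Fin (n + 1)) :
    Xg H K a b ⊓ Xg H K i j = Xg H K (min a i) (min b j) := by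
  rw [Xg, Xg, Xg, H_min hH, H_min hK, inf_inf_inf_comm]

lemma ell_congr (hH : IsCompositionSeries H) (hK : IsCompositionSeries K)
    {a b i j : Fin (n + 1)} (h : Xg H K a b = Xg H K i j) :
    ell H K a b = ell H K i j := by
  have e1 : Xg H K (min a i) (min b j) = Xg H K a b := by
    rw [← Xg_inf hH hK, h, inf_idem]
  have e2 : Xg H K (min a i) (min b j) = Xg H K i j := by
    rw [← Xg_inf hH hK, h, inf_idem]
  have r1 := (Xg_eq_iff_ell hH hK (min_le_left a i) (min_le_left b j)).1 e1
  have r2 := (Xg_eq_iff_ell hH hK (min_le_right a i) (min_le_right b j)).1 e2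
  omega

end Xlemmas
section CSLlattice
open scoped Classical

lemma mem_CSL_iff {A : Subgroup G} : A ∈ CSL H K ↔ ∃ i j, A = Xg H K i j := Iff.rfl

lemma inf_mem_CSL (hH : IsCompositionSeries H) (hK : IsCompositionSeries K)
    {A B : Subgroup G} (hA : A ∈ CSL H K) (hB : B ∈ CSL H K) : A ⊓ B ∈ CSL H K := by
  obtain ⟨a, b, rfl⟩ := hA
  obtain ⟨i, j, rfl⟩ := hB
  exact ⟨min a i, min b j, (Xg_inf hH hK a b i j).symm ▸ rfl⟩

lemma top_mem_CSL (hH : IsCompositionSeries H) (hK : IsCompositionSeries K) :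
    ⊤ ∈ CSL H K :=
  ⟨Fin.last n, Fin.last n, by rw [hH.2.1, hK.2.1, inf_top_eq]⟩

lemma bot_mem_CSL (hH : IsCompositionSeries H) (hK : IsCompositionSeries K) :
    ⊥ ∈ CSL H K :=
  ⟨0, 0, by rw [hH.1, hK.1, inf_bot_eq]⟩

variable (H K) in
@[reducible]
noncomputable def cslFintype : Fintype ↥(CSL H K) := by
  refine Set.Finite.fintype (Set.Finite.subset
    (Set.finite_range fun ij : Fin (n + 1) × Fin (n + 1) => H ij.1 ⊓ K ij.2) ?_)
  rintro A ⟨i, j, rfl⟩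
  exact ⟨(i, j), rfl⟩

@[reducible]
def cslSemilatticeInf (hH : IsCompositionSeries H) (hK : IsCompositionSeries K) :
    SemilatticeInf ↥(CSL H K) :=
  { (inferInstance : PartialOrder ↥(CSL H K)) with
    inf := fun A B => ⟨A.1 ⊓ B.1, inf_mem_CSL hH hK A.2 B.2⟩
    inf_le_left := fun A B => by
      change A.1 ⊓ B.1 ≤ A.1
      exact inf_le_left
    inf_le_right := fun A B => by
      change A.1 ⊓ B.1 ≤ B.1
      exact inf_le_right
    le_inf := fun A B C h1 h2 => by
      change A.1 ≤ B.1 ⊓ C.1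
      exact le_inf h1 h2 }

@[reducible]
def cslOrderTop (hH : IsCompositionSeries H) (hK : IsCompositionSeries K) :
    OrderTop ↥(CSL H K) where
  top := ⟨⊤, top_mem_CSL hH hK⟩
  le_top := fun A => by
    change A.1 ≤ ⊤
    exact le_top

@[reducible]
def cslOrderBot (hH : IsCompositionSeries H) (hK : IsCompositionSeries K) :
    OrderBot ↥(CSL H K) where
  bot := ⟨⊥, bot_mem_CSL hH hK⟩
  bot_le := fun A => by
    change ⊥ ≤ A.1
    exact bot_le

@[reducible]
noncomputable def cslLattice (hH : IsCompositionSeries H) (hK : IsCompositionSeries K) :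
    Lattice ↥(CSL H K) :=
  letI := cslFintype H K
  letI si := cslSemilatticeInf hH hK
  letI := cslOrderTop hH hK
  { si with
    sup := fun A B => (Finset.univ.filter fun C => A ≤ C ∧ B ≤ C).inf id
    le_sup_left := fun A B => Finset.le_inf fun C hC => ((Finset.mem_filter.1 hC).2).1
    le_sup_right := fun A B => Finset.le_inf fun C hC => ((Finset.mem_filter.1 hC).2).2
    sup_le := fun A B C h1 h2 =>
      Finset.inf_le (Finset.mem_filter.2 ⟨Finset.mem_univ _, h1, h2⟩) }

noncomputable def ellS (A : ↥(CSL H K)) : ℕ :=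
  ell H K A.2.choose A.2.choose_spec.choose

lemma ellS_eq (hH : IsCompositionSeries H) (hK : IsCompositionSeries K)
    (A : ↥(CSL H K)) {i j : Fin (n + 1)} (h : A.1 = Xg H K i j) :
    ellS A = ell H K i j := by
  have h0 : A.1 = Xg H K A.2.choose A.2.choose_spec.choose := A.2.choose_spec.choose_spec
  exact ell_congr hH hK (h0.symm.trans h)

/-- canonical comparable coordinates for `A ≤ B` -/
lemma coords_le (hH : IsCompositionSeries H) (hK : IsCompositionSeries K) {A B : ↥(CSL H K)} (hAB : A ≤ B) {i j : Fin (n + 1)}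
    (hB : B.1 = Xg H K i j) :
    ∃ a b : Fin (n + 1), a ≤ i ∧ b ≤ j ∧ A.1 = Xg H K a b := by
  obtain ⟨a0, b0, hA⟩ := A.2
  refine ⟨min a0 i, min b0 j, min_le_right _ _, min_le_right _ _, ?_⟩
  have hA' : (A : Subgroup G) = Xg H K a0 b0 := hA
  rw [← Xg_inf hH hK, ← hA', ← hB]
  exact (inf_eq_left.2 hAB).symm

lemma ellS_lt (hH : IsCompositionSeries H) (hK : IsCompositionSeries K) {A B : ↥(CSL H K)} (h : A < B) : ellS A < ellS B := by
  obtain ⟨i, j, hB⟩ := B.2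
  obtain ⟨a, b, hai, hbj, hA⟩ := coords_le hH hK h.le hB
  rw [ellS_eq hH hK A hA, ellS_eq hH hK B hB]
  have hle : ell H K a b ≤ ell H K i j :=
    le_trans (ell_mono_fst hai b) (ell_mono_snd hH hK i hbj)
  refine lt_of_le_of_ne hle fun heq => h.ne (Subtype.ext ?_)
  rw [hA, hB]
  exact (Xg_eq_iff_ell hH hK hai hbj).2 heq

lemma ellS_le (hH : IsCompositionSeries H) (hK : IsCompositionSeries K) {A B : ↥(CSL H K)} (h : A ≤ B) : ellS A ≤ ellS B := by
  rcases eq_or_lt_of_le h with rfl | h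
  · exact le_rfl
  · exact (ellS_lt hH hK h).le

lemma exists_step_aux (hH : IsCompositionSeries H) (hK : IsCompositionSeries K) :
    ∀ (k : ℕ) (a b : Fin (n + 1)) {i j : Fin (n + 1)}, a ≤ i → b ≤ j →
      (i : ℕ) - (a : ℕ) + ((j : ℕ) - (b : ℕ)) ≤ k →
      ell H K a b < ell H K i j →
      ∃ x y : Fin (n + 1), a ≤ x ∧ x ≤ i ∧ b ≤ y ∧ y ≤ j ∧
        ell H K x y = ell H K a b + 1 := by
  intro k
  induction k with
  | zero =>
    intro a b i j hai hbj hm hl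
    rw [Fin.le_def] at hai hbj
    have : a = i := Fin.ext (by omega)
    have : b = j := Fin.ext (by omega)
    subst_vars
    omega
  | succ k ih =>
    intro a b i j hai hbj hm hl
    by_cases hia : (a : ℕ) < (i : ℕ)
    · have hn : (a : ℕ) < n := by
        have := i.isLt
        omega
      set p : Fin n := ⟨(a : ℕ), hn⟩ with hp
      have hpv : (p : ℕ) = (a : ℕ) := rfl
      have ha : a = p.castSucc := Fin.ext (by simp [hp])
      have hstep := ell_hstep hH hK p b
      by_cases hE : Ed H K p b
      · rw [if_pos hE, Nat.add_zero] at hstep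
        have hsucci : p.succ ≤ i := Fin.le_def.2 (by simp only [Fin.val_succ, hpv]; omega)
        have hl' : ell H K p.succ b < ell H K i j := by
          rw [hstep, ← ha]
          exact hl
        obtain ⟨x, y, h1, h2, h3, h4, h5⟩ := ih p.succ b hsucci hbj
          (by simp only [Fin.val_succ, hpv]; omega) hl'
        refine ⟨x, y, le_trans (Fin.le_def.2 (by simp only [Fin.val_succ, hpv]; omega)) h1,
          h2, h3, h4, ?_⟩
        rw [h5, hstep, ← ha]
      · refine ⟨p.succ, b, Fin.le_def.2 (by simp only [Fin.val_succ, hpv, Fin.coe_castSucc]; omega),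
          Fin.le_def.2 (by simp only [Fin.val_succ, hpv]; omega), le_rfl, hbj, ?_⟩
        rw [hstep, if_neg hE, ← ha]
    · have haeq : a = i := by
        rw [Fin.le_def] at hai
        exact Fin.ext (by omega)
      subst haeq
      have hjb : (b : ℕ) < (j : ℕ) := by
        rcases lt_or_eq_of_le hbj with h | h
        · exact Fin.lt_def.1 h
        · subst h; omega
      have hn : (b : ℕ) < n := by
        have := j.isLt
        omega
      set q : Fin n := ⟨(b : ℕ), hn⟩ with hq
      have hqv : (q : ℕ) = (b : ℕ) := rfl
      have hb : b = q.castSucc := Fin.ext (by simp [hq])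
      have hstep := ell_vstep hH hK a q
      by_cases hE : Ed K H q a
      · rw [if_pos hE, Nat.add_zero] at hstep
        have hsuccj : q.succ ≤ j := Fin.le_def.2 (by simp only [Fin.val_succ, hqv]; omega)
        have hl' : ell H K a q.succ < ell H K a j := by
          rw [hstep, ← hb]
          exact hl
        obtain ⟨x, y, h1, h2, h3, h4, h5⟩ := ih a q.succ le_rfl hsuccj
          (by simp only [Fin.val_succ, hqv]; omega) hl'
        refine ⟨x, y, h1, h2, le_trans (Fin.le_def.2 (by simp only [Fin.val_succ, hqv]; omega)) h3,
          h4, ?_⟩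
        rw [h5, hstep, ← hb]
      · refine ⟨a, q.succ, le_rfl, le_rfl, Fin.le_def.2 (by simp only [Fin.val_succ, hqv, Fin.coe_castSucc]; omega),
          Fin.le_def.2 (by simp only [Fin.val_succ, hqv]; omega), ?_⟩
        rw [hstep, if_neg hE, ← hb]

lemma exists_between (hH : IsCompositionSeries H) (hK : IsCompositionSeries K) {A B : ↥(CSL H K)} (h : A < B) :
    ∃ C : ↥(CSL H K), A < C ∧ C ≤ B ∧ ellS C = ellS A + 1 := by
  obtain ⟨i, j, hB⟩ := B.2
  obtain ⟨a, b, hai, hbj, hA⟩ := coords_le hH hK h.le hB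
  have hl : ell H K a b < ell H K i j := by
    have := ellS_lt hH hK h
    rwa [ellS_eq hH hK A hA, ellS_eq hH hK B hB] at this
  obtain ⟨x, y, h1, h2, h3, h4, h5⟩ := exists_step_aux hH hK _ a b hai hbj le_rfl hl
  refine ⟨⟨Xg H K x y, ⟨x, y, rfl⟩⟩, ?_, ?_, ?_⟩
  · refine lt_of_le_of_ne ?_ fun heq => ?_
    · change A.1 ≤ Xg H K x y
      rw [hA]
      exact Xg_mono hH hK h1 h3
    · have : A.1 = Xg H K x y := by rw [heq]
      have := ell_congr hH hK (hA.symm.trans this)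
      omega
  · change Xg H K x y ≤ B.1
    rw [hB]
    exact Xg_mono hH hK h2 h4
  · rw [ellS_eq hH hK _ rfl, ellS_eq hH hK A hA, h5]

lemma ellS_covby (hH : IsCompositionSeries H) (hK : IsCompositionSeries K) {A B : ↥(CSL H K)} (h : A ⋖ B) :
    ellS B = ellS A + 1 := by
  obtain ⟨C, h1, h2, h3⟩ := exists_between hH hK h.lt
  rcases lt_or_eq_of_le h2 with h4 | rfl
  · exact absurd h4 (h.2 h1)
  · exact h3

lemma covby_of_ell (hH : IsCompositionSeries H) (hK : IsCompositionSeries K) {A B : ↥(CSL H K)} (hlt : A < B)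
    (hle : ellS B ≤ ellS A + 1) : A ⋖ B := by
  refine ⟨hlt, fun C h1 h2 => ?_⟩
  have := ellS_lt hH hK h1
  have := ellS_lt hH hK h2
  omega

/-- the key lemma : lower semimodularity of CSL -/
lemma lower_semimod_key (hH : IsCompositionSeries H) (hK : IsCompositionSeries K) {A B C D : ↥(CSL H K)} (hAC : A ≤ C) (hBC : B ≤ C)
    (hcov : A ⋖ C) (hD : D.1 = A.1 ⊓ B.1) (hnBA : ¬ B ≤ A) : D ⋖ B := by
  obtain ⟨u, v, hC⟩ := C.2
  obtain ⟨u', v', hu, hv, hA⟩ := coords_le hH hK hAC hC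
  obtain ⟨i, j, hi, hj, hB⟩ := coords_le hH hK hBC hC
  have hcovell : ell H K u v = ell H K u' v' + 1 := by
    have := ellS_covby hH hK hcov
    rwa [ellS_eq hH hK A hA, ellS_eq hH hK C hC] at this
  have hDX : D.1 = Xg H K (min i u') (min j v') := by
    rw [hD, hA, hB, inf_comm, Xg_inf hH hK]
  have hcore := core_ineq hH hK hu hv hi hj hcovell
  have hDlt : D < B := by
    refine lt_of_le_of_ne ?_ fun heq => hnBA ?_
    · change D.1 ≤ B.1
      rw [hD]
      exact inf_le_right
    · change B.1 ≤ A.1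
      rw [← heq, hD]
      exact inf_le_left
  refine covby_of_ell hH hK hDlt ?_
  rw [ellS_eq hH hK D hDX, ellS_eq hH hK B hB]
  exact hcore

end CSLlattice
section Transfer
variable {α : Type*} {β : Type*}

/-- pull back a lattice structure along an equivalence -/
@[reducible]
def pbLattice (e : β ≃ α) [Lattice α] : Lattice β where
  le x y := e x ≤ e y
  le_refl x := le_refl _
  le_trans x y z := le_trans
  le_antisymm x y h1 h2 := e.injective (le_antisymm h1 h2)
  sup x y := e.symm (e x ⊔ e y)
  inf x y := e.symm (e x ⊓ e y)
  le_sup_left x y := by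
    change e x ≤ e (e.symm _)
    rw [Equiv.apply_symm_apply]
    exact le_sup_left
  le_sup_right x y := by
    change e y ≤ e (e.symm _)
    rw [Equiv.apply_symm_apply]
    exact le_sup_right
  sup_le x y z h1 h2 := by
    change e (e.symm _) ≤ e z
    rw [Equiv.apply_symm_apply]
    exact sup_le h1 h2
  inf_le_left x y := by
    change e (e.symm _) ≤ e x
    rw [Equiv.apply_symm_apply]
    exact inf_le_left
  inf_le_right x y := by
    change e (e.symm _) ≤ e y
    rw [Equiv.apply_symm_apply]
    exact inf_le_right
  le_inf x y z h1 h2 := by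
    change e x ≤ e (e.symm _)
    rw [Equiv.apply_symm_apply]
    exact le_inf h1 h2

lemma joinIrred_of_orderIso [Lattice α] [Lattice β] [OrderBot α] [OrderBot β]
    (f : α ≃o β) {x : β} (h : JoinIrred x) : JoinIrred (f.symm x) := by
  obtain ⟨hne, hsup⟩ := h
  refine ⟨fun hbot => hne ?_, fun u v huv => ?_⟩
  · rw [← f.apply_symm_apply x, hbot, f.map_bot]
  · have hx : x = f u ⊔ f v := by rw [← f.map_sup, ← huv, f.apply_symm_apply]
    rcases hsup _ _ hx with h | h
    · exact Or.inl (by rw [h, f.symm_apply_apply])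
    · exact Or.inr (by rw [h, f.symm_apply_apply])

lemma slim_of_orderIso [Lattice α] [Lattice β] [OrderBot α] [OrderBot β]
    (f : α ≃o β) (h : Slim α) : Slim β := by
  rintro ⟨a, b, c, ia, ib, ic, n1, n2, n3, n4, n5, n6⟩
  refine h ⟨f.symm a, f.symm b, f.symm c, joinIrred_of_orderIso f ia,
    joinIrred_of_orderIso f ib, joinIrred_of_orderIso f ic, ?_, ?_, ?_, ?_, ?_, ?_⟩ <;>
    rw [f.symm.le_iff_le] <;> assumption

lemma covBy_of_orderIso [Lattice α] [Lattice β] (f : α ≃o β) {x y : α} (h : x ⋖ y) :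
    f x ⋖ f y := by
  refine ⟨f.lt_iff_lt.2 h.1, fun z h1 h2 => ?_⟩
  have hz1 : x < f.symm z := by
    have := f.symm.lt_iff_lt.2 h1
    rwa [f.symm_apply_apply] at this
  have hz2 : f.symm z < y := by
    have := f.symm.lt_iff_lt.2 h2
    rwa [f.symm_apply_apply] at this
  exact h.2 hz1 hz2

lemma semimod_of_orderIso [Lattice α] [Lattice β] (f : α ≃o β) (h : Semimodular α) :
    Semimodular β := by
  intro a b hab
  have h1 : f.symm a ⊓ f.symm b ⋖ f.symm a := by
    rw [← f.symm.map_inf]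
    exact covBy_of_orderIso f.symm hab
  have h2 := h _ _ h1
  have h3 := covBy_of_orderIso f h2
  rwa [f.apply_symm_apply, f.map_sup, f.apply_symm_apply, f.apply_symm_apply] at h3

end Transfer
variable {α : Type*} in
/-- a `Type 0` synonym of `Fin m` carrying no ambient instances -/
def Pack (m : ℕ) : Type := Fin m

def packEquiv (m : ℕ) : Pack m ≃ Fin m := Equiv.refl (Fin m)

end CSLP

open CSLP in
/-- for any two composition series `H`, `K` of a group `G` (of the same
length `n`, by Jordan–Hölder), the set `CSL H K` ordered by reverse inclusion is a
slim semimodular (finite) lattice; that is, it is order-isomorphic to one. -/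
theorem dual_csl_slim_semimodular
    {G : Type*} [Group G] {n : ℕ} (H K : Fin (n + 1) → Subgroup G)
    (hH : IsCompositionSeries H) (hK : IsCompositionSeries K) :
    ∃ (L : Type) (_ : Lattice L) (_ : Fintype L) (_ : BoundedOrder L),
      Slim L ∧ Semimodular L ∧ Nonempty ((↥(CSL H K))ᵒᵈ ≃o L) := by
  classical
  letI instL : Lattice ↥(CSL H K) := cslLattice hH hK
  letI instT : OrderTop ↥(CSL H K) := cslOrderTop hH hK
  letI instB : OrderBot ↥(CSL H K) := cslOrderBot hH hK
  letI instBO : BoundedOrder ↥(CSL H K) := { toOrderTop := instT, toOrderBot := instB }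
  letI instF : Fintype ↥(CSL H K) := cslFintype H K
  letI instFd : Fintype (↥(CSL H K))ᵒᵈ := instF
  -- Semimodularity of the dual
  have hsemi : Semimodular (↥(CSL H K))ᵒᵈ := by
    intro a b hab
    obtain ⟨hlt1, hmid1⟩ := hab
    rw [lt_iff_le_not_ge] at hlt1
    -- translate the hypothesis cover to S
    have h1 : OrderDual.ofDual a ⋖ OrderDual.ofDual a ⊔ OrderDual.ofDual b := by
      constructor
      · rw [lt_iff_le_not_ge]
        exact ⟨hlt1.1, hlt1.2⟩
      · intro z hz1 hz2
        have hz1' : OrderDual.toDual z < a := by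
          rw [lt_iff_le_not_ge]
          rw [lt_iff_le_not_ge] at hz1
          exact ⟨hz1.1, hz1.2⟩
        have hz2' : a ⊓ b < OrderDual.toDual z := by
          rw [lt_iff_le_not_ge]
          rw [lt_iff_le_not_ge] at hz2
          exact ⟨hz2.1, hz2.2⟩
        exact hmid1 hz2' hz1'
    by_cases hBA : OrderDual.ofDual b ≤ OrderDual.ofDual a
    · have heq : OrderDual.ofDual a ⊔ OrderDual.ofDual b = OrderDual.ofDual a :=
        le_antisymm (sup_le le_rfl hBA) le_sup_left
      rw [heq] at h1
      exact absurd h1.1 (lt_irrefl _)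
    · have hres := lower_semimod_key hH hK
        (le_sup_left : OrderDual.ofDual a ≤ OrderDual.ofDual a ⊔ OrderDual.ofDual b)
        (le_sup_right : OrderDual.ofDual b ≤ OrderDual.ofDual a ⊔ OrderDual.ofDual b)
        h1 (rfl : (OrderDual.ofDual a ⊓ OrderDual.ofDual b).1 = _ ⊓ _) hBA
      obtain ⟨hlt2, hmid2⟩ := hres
      rw [lt_iff_le_not_ge] at hlt2
      constructor
      · rw [lt_iff_le_not_ge]
        exact ⟨hlt2.1, hlt2.2⟩
      · intro z hz1 hz2
        have hz1' : OrderDual.ofDual a ⊓ OrderDual.ofDual b < OrderDual.ofDual z := by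
          rw [lt_iff_le_not_ge]
          rw [lt_iff_le_not_ge] at hz2
          exact ⟨hz2.1, hz2.2⟩
        have hz2' : OrderDual.ofDual z < OrderDual.ofDual b := by
          rw [lt_iff_le_not_ge]
          rw [lt_iff_le_not_ge] at hz1
          exact ⟨hz1.1, hz1.2⟩
        exact hmid2 hz1' hz2'
  -- Slimness of the dual
  have hslim : Slim (↥(CSL H K))ᵒᵈ := by
    rintro ⟨a, b, c, ia, ib, ic, n1, n2, n3, n4, n5, n6⟩
    have tag : ∀ x : (↥(CSL H K))ᵒᵈ, JoinIrred x →
        (∃ i, (OrderDual.ofDual x).1 = H i) ∨ (∃ j, (OrderDual.ofDual x).1 = K j) := by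
      intro x hx
      obtain ⟨i, j, hxij⟩ := (OrderDual.ofDual x).2
      have hHi : H i ∈ CSL H K := ⟨i, Fin.last n, by rw [hK.2.1, inf_top_eq]⟩
      have hKj : K j ∈ CSL H K := ⟨Fin.last n, j, by rw [hH.2.1, top_inf_eq]⟩
      have hinf : OrderDual.ofDual x = (⟨H i, hHi⟩ : ↥(CSL H K)) ⊓ ⟨K j, hKj⟩ :=
        Subtype.ext hxij
      have hxd : x = OrderDual.toDual ((⟨H i, hHi⟩ : ↥(CSL H K))) ⊔
          OrderDual.toDual ((⟨K j, hKj⟩ : ↥(CSL H K))) :=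
        congrArg OrderDual.toDual hinf
      rcases hx.2 _ _ hxd with h | h
      · exact Or.inl ⟨i, by rw [h]; rfl⟩
      · exact Or.inr ⟨j, by rw [h]; rfl⟩
    have comp : ∀ (x y : (↥(CSL H K))ᵒᵈ) (W : Fin (n + 1) → Subgroup G), Monotone W →
        (∃ i, (OrderDual.ofDual x).1 = W i) → (∃ j, (OrderDual.ofDual y).1 = W j) →
        x ≤ y ∨ y ≤ x := by
      rintro x y W hW ⟨i, hi⟩ ⟨j, hj⟩
      rcases le_total i j with h | h
      · refine Or.inr ?_
        show (OrderDual.ofDual x).1 ≤ (OrderDual.ofDual y).1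
        rw [hi, hj]
        exact hW h
      · refine Or.inl ?_
        show (OrderDual.ofDual y).1 ≤ (OrderDual.ofDual x).1
        rw [hi, hj]
        exact hW h
    rcases tag a ia with ha | ha <;> rcases tag b ib with hb | hb <;>
      rcases tag c ic with hc | hc <;>
      first
      | exact (comp a b H (csMono hH) ha hb).elim n1 n2
      | exact (comp a b K (csMono hK) ha hb).elim n1 n2
      | exact (comp a c H (csMono hH) ha hc).elim n3 n4
      | exact (comp a c K (csMono hK) ha hc).elim n3 n4
      | exact (comp b c H (csMono hH) hb hc).elim n5 n6
      | exact (comp b c K (csMono hK) hb hc).elim n5 n6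
  -- transport to a `Type 0` copy
  set m := Fintype.card (↥(CSL H K))ᵒᵈ with hm
  let e : Pack m ≃ (↥(CSL H K))ᵒᵈ := (packEquiv m).trans (Fintype.equivFin _).symm
  letI instFP : Fintype (Pack m) := Fintype.ofEquiv _ (packEquiv m).symm
  letI instLF : Lattice (Pack m) := pbLattice e
  letI instBOF : BoundedOrder (Pack m) :=
    { top := e.symm ⊤
      le_top := fun x => by
        show e x ≤ e (e.symm ⊤)
        rw [Equiv.apply_symm_apply]
        exact le_top
      bot := e.symm ⊥
      bot_le := fun x => by
        show e (e.symm ⊥) ≤ e x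
        rw [Equiv.apply_symm_apply]
        exact bot_le }
  have iso : (↥(CSL H K))ᵒᵈ ≃o Pack m :=
    { toEquiv := e.symm
      map_rel_iff' := @fun x y => by
        constructor
        · intro h'
          have h2 : e (e.symm x) ≤ e (e.symm y) := h'
          rwa [Equiv.apply_symm_apply, Equiv.apply_symm_apply] at h2
        · intro h'
          show e (e.symm x) ≤ e (e.symm y)
          rwa [Equiv.apply_symm_apply, Equiv.apply_symm_apply] }
  exact ⟨Pack m, instLF, instFP, instBOF,
    slim_of_orderIso iso hslim, semimod_of_orderIso iso hsemi, ⟨iso⟩⟩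
end

section
/- For every slim semimodular lattice L of length n ≥ 1 there exists a permutation π of {1,…,n} such that L is order-isomorphic to the quotient G_n/β_π (the set of β_π-classes ordered by [a] ≤ [b] iff (a ⊔ b, b) ∈ β_π). -/
/-- `L` has length `n`: there is a chain `x₀ < ⋯ < x_n` and no longer chain. -/
def HasLength (L : Type*) [Preorder L] (n : ℕ) : Prop :=
  (∃ x : Fin (n + 1) → L, StrictMono x) ∧
    ∀ (m : ℕ) (x : Fin (m + 1) → L), StrictMono x → m ≤ n

/-- The square grid `G_n`: the direct product of two `(n+1)`-element chains. -/
abbrev Grid (n : ℕ) := Fin (n + 1) × Fin (n + 1)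

/-- `θ` is a join-congruence: an equivalence relation compatible with `⊔`. -/
def IsJoinCong {S : Type*} [SemilatticeSup S] (θ : S → S → Prop) : Prop :=
  Equivalence θ ∧ ∀ a b c : S, θ a b → θ (a ⊔ c) (b ⊔ c)

/-- The smallest join-congruence containing the relation `R`. -/
def joinCongGen {S : Type*} [SemilatticeSup S] (R : S → S → Prop) : S → S → Prop :=
  fun a b => ∀ θ : S → S → Prop, IsJoinCong θ → (∀ x y, R x y → θ x y) → θ a b

theorem joinCongGen_equivalence {S : Type*} [SemilatticeSup S] (R : S → S → Prop) :
    Equivalence (joinCongGen R) where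
  refl a := fun _θ hθ _ => hθ.1.refl a
  symm h := fun θ hθ hR => hθ.1.symm (h θ hθ hR)
  trans h₁ h₂ := fun θ hθ hR => hθ.1.trans (h₁ θ hθ hR) (h₂ θ hθ hR)

/-- The generating pairs of `β_π`: `((i-1, π i), (i, π i))` and `((i, π i - 1), (i, π i))`
for `i ∈ {1,…,n}` (here `i : Fin n` represents the element `i+1` of `{1,…,n}`). -/
def betaGen {n : ℕ} (π : Equiv.Perm (Fin n)) : Grid n → Grid n → Prop :=
  fun a b => ∃ i : Fin n,
    (a = (i.castSucc, (π i).succ) ∧ b = (i.succ, (π i).succ)) ∨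
    (a = (i.succ, (π i).castSucc) ∧ b = (i.succ, (π i).succ))

/-- `β_π`, the smallest join-congruence on the grid containing the pairs of `betaGen π`. -/
def beta {n : ℕ} (π : Equiv.Perm (Fin n)) : Grid n → Grid n → Prop :=
  joinCongGen (betaGen π)

/-- The setoid on the grid determined by `β_π`. -/
def betaSetoid {n : ℕ} (π : Equiv.Perm (Fin n)) : Setoid (Grid n) :=
  ⟨beta π, joinCongGen_equivalence _⟩

/-- The quotient `G_n/β_π`. -/
def QuotGrid {n : ℕ} (π : Equiv.Perm (Fin n)) := Quotient (betaSetoid π)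

/-- The order on `G_n/β_π`: `[a] ≤ [b]` iff `(a ⊔ b, b) ∈ β_π`. -/
instance QuotGrid.instLE {n : ℕ} (π : Equiv.Perm (Fin n)) : LE (QuotGrid π) :=
  ⟨fun x y => ∃ a b : Grid n,
    x = Quotient.mk (betaSetoid π) a ∧ y = Quotient.mk (betaSetoid π) b ∧ beta π (a ⊔ b) b⟩


/-- Dilworth's theorem for width ≤ 2 (Galvin's proof): a finite poset with no
3-element antichain is the union of two chains. -/
theorem two_chain_cover {α : Type*} [PartialOrder α] [DecidableEq α] :
    ∀ (N : ℕ) (S : Finset α), S.card ≤ N →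
    (∀ a b c : α, a ∈ S → b ∈ S → c ∈ S → ¬a ≤ b → ¬b ≤ a → ¬a ≤ c → ¬c ≤ a →
      ¬b ≤ c → ¬c ≤ b → False) →
    ∃ A B : Finset α, A ∪ B = S ∧ (∀ x ∈ A, ∀ y ∈ A, x ≤ y ∨ y ≤ x) ∧
      (∀ x ∈ B, ∀ y ∈ B, x ≤ y ∨ y ≤ x) := by
  classical
  intro N
  induction N with
  | zero =>
    intro S hc _
    have : S = ∅ := Finset.card_eq_zero.1 (Nat.le_zero.1 hc)
    exact ⟨∅, ∅, by simp [this], by simp, by simp⟩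
  | succ N IH =>
    intro S hcard hw
    rcases S.eq_empty_or_nonempty with rfl | hne
    · exact ⟨∅, ∅, by simp, by simp, by simp⟩
    obtain ⟨t, htS, htmax⟩ := S.exists_maximal hne
    set T : Finset α := S.filter (fun x => x ≤ t) with hT
    have htT : t ∈ T := by simp [hT, htS]
    obtain ⟨m, hmT, hmmin⟩ := T.exists_minimal ⟨t, htT⟩
    have hmS : m ∈ S := (Finset.mem_filter.1 hmT).1
    have hmt : m ≤ t := (Finset.mem_filter.1 hmT).2
    by_cases hch : ∀ x ∈ S \ ({m, t} : Finset α), ∀ y ∈ S \ ({m, t} : Finset α),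
        x ≤ y ∨ y ≤ x
    · refine ⟨{m, t}, S \ ({m, t} : Finset α), ?_, ?_, hch⟩
      · apply Finset.ext; intro x
        simp only [Finset.mem_union, Finset.mem_sdiff, Finset.mem_insert,
          Finset.mem_singleton]
        constructor
        · rintro (( rfl | rfl) | ⟨hx, _⟩) <;> first | exact hmS | exact htS | exact hx
        · intro hx
          by_cases h1 : x = m ∨ x = t
          · exact Or.inl h1
          · push_neg at h1
            refine Or.inr ⟨hx, fun h => ?_⟩
            rcases h with h | h
            · exact h1.1 h
            · exact h1.2 h
      · intro x hx y hy
        simp only [Finset.mem_insert, Finset.mem_singleton] at hx hy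
        rcases hx with rfl | rfl <;> rcases hy with rfl | rfl <;>
          first | exact Or.inl le_rfl | exact Or.inl hmt | exact Or.inr hmt
    · push_neg at hch
      obtain ⟨a1, ha1, a2, ha2, h12, h21⟩ := hch
      have ha1S : a1 ∈ S := (Finset.mem_sdiff.1 ha1).1
      have ha2S : a2 ∈ S := (Finset.mem_sdiff.1 ha2).1
      have ha1C : a1 ∉ ({m, t} : Finset α) := (Finset.mem_sdiff.1 ha1).2
      have ha2C : a2 ∉ ({m, t} : Finset α) := (Finset.mem_sdiff.1 ha2).2
      set Pm : Finset α := S.filter (fun x => x ≤ a1 ∨ x ≤ a2) with hPm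
      set Pp : Finset α := S.filter (fun x => a1 ≤ x ∨ a2 ≤ x) with hPp
      -- every element of S is in Pm or Pp
      have hcover : ∀ x ∈ S, x ∈ Pm ∨ x ∈ Pp := by
        intro x hx
        by_contra h
        push_neg at h
        simp only [hPm, hPp, Finset.mem_filter, hx, true_and, not_or] at h
        exact hw x a1 a2 hx ha1S ha2S h.1.1 h.2.1 h.1.2 h.2.2 h12 h21
      have htPm : t ∉ Pm := by
        simp only [hPm, Finset.mem_filter, htS, true_and, not_or]
        constructor
        · intro h
          rcases lt_or_eq_of_le h with h | rfl
          · exact h.not_ge (htmax ha1S h.le)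
          · exact ha1C (by simp)
        · intro h
          rcases lt_or_eq_of_le h with h | rfl
          · exact h.not_ge (htmax ha2S h.le)
          · exact ha2C (by simp)
      have hmPp : m ∉ Pp := by
        simp only [hPp, Finset.mem_filter, hmS, true_and, not_or]
        constructor
        · intro h
          have : a1 ∈ T := Finset.mem_filter.2 ⟨ha1S, h.trans hmt⟩
          rcases lt_or_eq_of_le h with h' | h'
          · exact h'.not_ge (hmmin this h'.le)
          · exact ha1C (by simp [← h'])
        · intro h
          have : a2 ∈ T := Finset.mem_filter.2 ⟨ha2S, h.trans hmt⟩
          rcases lt_or_eq_of_le h with h' | h'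
          · exact h'.not_ge (hmmin this h'.le)
          · exact ha2C (by simp [← h'])
      -- a1, a2 belong to both filtered sets
      have ha1Pm : a1 ∈ Pm := Finset.mem_filter.2 ⟨ha1S, Or.inl le_rfl⟩
      have ha2Pm : a2 ∈ Pm := Finset.mem_filter.2 ⟨ha2S, Or.inr le_rfl⟩
      have ha1Pp : a1 ∈ Pp := Finset.mem_filter.2 ⟨ha1S, Or.inl le_rfl⟩
      have ha2Pp : a2 ∈ Pp := Finset.mem_filter.2 ⟨ha2S, Or.inr le_rfl⟩
      -- cardinality bounds
      have hPmcard : Pm.card ≤ N := by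
        have h1 : Pm ⊂ S := ⟨Finset.filter_subset _ _, fun h => htPm (h htS)⟩
        have := Finset.card_lt_card h1
        omega
      have hPpcard : Pp.card ≤ N := by
        have h1 : Pp ⊂ S := ⟨Finset.filter_subset _ _, fun h => hmPp (h hmS)⟩
        have := Finset.card_lt_card h1
        omega
      -- top / bottom properties
      have topPm : ∀ w, (w = a1 ∨ w = a2) → ∀ W : Finset α, W ⊆ Pm →
          (∀ x ∈ W, ∀ y ∈ W, x ≤ y ∨ y ≤ x) → w ∈ W → ∀ x ∈ W, x ≤ w := by
        intro w hw12 W hWPm hWch hwW x hxW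
        rcases hWch x hxW w hwW with h | h
        · exact h
        · have hxPm := Finset.mem_filter.1 (hWPm hxW)
          rcases hw12 with rfl | rfl
          · rcases hxPm.2 with h' | h'
            · exact h'
            · exact absurd (h.trans h') h12
          · rcases hxPm.2 with h' | h'
            · exact absurd (h.trans h') h21
            · exact h'
      have botPp : ∀ w, (w = a1 ∨ w = a2) → ∀ W : Finset α, W ⊆ Pp →
          (∀ x ∈ W, ∀ y ∈ W, x ≤ y ∨ y ≤ x) → w ∈ W → ∀ x ∈ W, w ≤ x := by
        intro w hw12 W hWPp hWch hwW x hxW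
        rcases hWch x hxW w hwW with h | h
        · have hxPp := Finset.mem_filter.1 (hWPp hxW)
          rcases hw12 with rfl | rfl
          · rcases hxPp.2 with h' | h'
            · exact h'
            · exact absurd (h'.trans h) h21
          · rcases hxPp.2 with h' | h'
            · exact absurd (h'.trans h) h12
            · exact h'
        · exact h
      -- apply the induction hypothesis to both parts
      obtain ⟨Am, Bm, hUm, hAm, hBm⟩ := IH Pm hPmcard
        (fun a b c ha hb hc => hw a b c (Finset.filter_subset _ _ ha)
          (Finset.filter_subset _ _ hb) (Finset.filter_subset _ _ hc))
      obtain ⟨Ap, Bp, hUp, hApch, hBpch⟩ := IH Pp hPpcard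
        (fun a b c ha hb hc => hw a b c (Finset.filter_subset _ _ ha)
          (Finset.filter_subset _ _ hb) (Finset.filter_subset _ _ hc))
      -- the gluing argument
      have glue : ∀ Xm Ym Xp Yp : Finset α, Xm ∪ Ym = Pm → Xp ∪ Yp = Pp →
          (∀ x ∈ Xm, ∀ y ∈ Xm, x ≤ y ∨ y ≤ x) → (∀ x ∈ Ym, ∀ y ∈ Ym, x ≤ y ∨ y ≤ x) →
          (∀ x ∈ Xp, ∀ y ∈ Xp, x ≤ y ∨ y ≤ x) → (∀ x ∈ Yp, ∀ y ∈ Yp, x ≤ y ∨ y ≤ x) →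
          a1 ∈ Xm → a1 ∈ Xp →
          ∃ A B : Finset α, A ∪ B = S ∧ (∀ x ∈ A, ∀ y ∈ A, x ≤ y ∨ y ≤ x) ∧
            (∀ x ∈ B, ∀ y ∈ B, x ≤ y ∨ y ≤ x) := by
        intro Xm Ym Xp Yp hUXm hUXp hXm hYm hXp hYp ha1Xm ha1Xp
        have hXmPm : Xm ⊆ Pm := hUXm ▸ Finset.subset_union_left
        have hYmPm : Ym ⊆ Pm := hUXm ▸ Finset.subset_union_right
        have hXpPp : Xp ⊆ Pp := hUXp ▸ Finset.subset_union_left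
        have hYpPp : Yp ⊆ Pp := hUXp ▸ Finset.subset_union_right
        have ha2Ym : a2 ∈ Ym := by
          have : a2 ∈ Xm ∪ Ym := hUXm ▸ ha2Pm
          rcases Finset.mem_union.1 this with h | h
          · rcases hXm a1 ha1Xm a2 h with h' | h'
            · exact absurd h' h12
            · exact absurd h' h21
          · exact h
        have ha2Yp : a2 ∈ Yp := by
          have : a2 ∈ Xp ∪ Yp := hUXp ▸ ha2Pp
          rcases Finset.mem_union.1 this with h | h
          · rcases hXp a1 ha1Xp a2 h with h' | h'
            · exact absurd h' h12
            · exact absurd h' h21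
          · exact h
        refine ⟨Xm ∪ Xp, Ym ∪ Yp, ?_, ?_, ?_⟩
        · apply Finset.ext; intro x
          simp only [Finset.mem_union]
          constructor
          · rintro ((h | h) | (h | h))
            · exact Finset.filter_subset _ _ (hXmPm h)
            · exact Finset.filter_subset _ _ (hXpPp h)
            · exact Finset.filter_subset _ _ (hYmPm h)
            · exact Finset.filter_subset _ _ (hYpPp h)
          · intro hx
            rcases hcover x hx with h | h
            · rcases Finset.mem_union.1 (hUXm ▸ h : x ∈ Xm ∪ Ym) with h' | h'
              · exact Or.inl (Or.inl h')
              · exact Or.inr (Or.inl h')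
            · rcases Finset.mem_union.1 (hUXp ▸ h : x ∈ Xp ∪ Yp) with h' | h'
              · exact Or.inl (Or.inr h')
              · exact Or.inr (Or.inr h')
        · intro x hx y hy
          rcases Finset.mem_union.1 hx with hx' | hx' <;>
            rcases Finset.mem_union.1 hy with hy' | hy'
          · exact hXm x hx' y hy'
          · exact Or.inl ((topPm a1 (Or.inl rfl) Xm hXmPm hXm ha1Xm x hx').trans
              (botPp a1 (Or.inl rfl) Xp hXpPp hXp ha1Xp y hy'))
          · exact Or.inr ((topPm a1 (Or.inl rfl) Xm hXmPm hXm ha1Xm y hy').trans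
              (botPp a1 (Or.inl rfl) Xp hXpPp hXp ha1Xp x hx'))
          · exact hXp x hx' y hy'
        · intro x hx y hy
          rcases Finset.mem_union.1 hx with hx' | hx' <;>
            rcases Finset.mem_union.1 hy with hy' | hy'
          · exact hYm x hx' y hy'
          · exact Or.inl ((topPm a2 (Or.inr rfl) Ym hYmPm hYm ha2Ym x hx').trans
              (botPp a2 (Or.inr rfl) Yp hYpPp hYp ha2Yp y hy'))
          · exact Or.inr ((topPm a2 (Or.inr rfl) Ym hYmPm hYm ha2Ym y hy').trans
              (botPp a2 (Or.inr rfl) Yp hYpPp hYp ha2Yp x hx'))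
          · exact hYp x hx' y hy'
      rcases Finset.mem_union.1 (hUm ▸ ha1Pm : a1 ∈ Am ∪ Bm) with h1m | h1m <;>
        rcases Finset.mem_union.1 (hUp ▸ ha1Pp : a1 ∈ Ap ∪ Bp) with h1p | h1p
      · exact glue Am Bm Ap Bp hUm hUp hAm hBm hApch hBpch h1m h1p
      · exact glue Am Bm Bp Ap hUm (by rw [Finset.union_comm]; exact hUp) hAm hBm hBpch hApch h1m h1p
      · exact glue Bm Am Ap Bp (by rw [Finset.union_comm]; exact hUm) hUp hBm hAm hApch hBpch h1m h1p
      · exact glue Bm Am Bp Ap (by rw [Finset.union_comm]; exact hUm)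
          (by rw [Finset.union_comm]; exact hUp) hBm hAm hBpch hApch h1m h1p

section Chains
variable {L : Type*} [Lattice L] [Fintype L]

lemma chain_head_le_getLast : ∀ (l : List L) (u : L), List.Chain' (· < ·) (u :: l) →
    u ≤ (u :: l).getLast (List.cons_ne_nil _ _) := by
  intro l
  induction l with
  | nil => intro u _; simp
  | cons w l ih =>
    intro u h
    rw [List.Chain', List.isChain_cons_cons] at h
    rw [List.getLast_cons (List.cons_ne_nil _ _)]
    exact h.1.le.trans (ih w h.2)

lemma cov_chain_lt (l : List L) (h : List.Chain' (· ⋖ ·) l) : List.Chain' (· < ·) l :=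
  List.IsChain.imp (fun _ _ hab => hab.lt) h

lemma cov_head_le_getLast (l : List L) (u : L) (h : List.Chain' (· ⋖ ·) (u :: l)) :
    u ≤ (u :: l).getLast (List.cons_ne_nil _ _) :=
  chain_head_le_getLast l u (cov_chain_lt _ h)

lemma nil_of_getLast_eq (u : L) (l : List L) (h : List.Chain' (· ⋖ ·) (u :: l))
    (h2 : (u :: l).getLast (List.cons_ne_nil _ _) = u) : l = [] := by
  cases l with
  | nil => rfl
  | cons w l =>
    exfalso
    rw [List.Chain', List.isChain_cons_cons] at h
    rw [List.getLast_cons (List.cons_ne_nil _ _)] at h2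
    have := h.1.lt.trans_le (cov_head_le_getLast l w h.2)
    rw [h2] at this
    exact lt_irrefl _ this

lemma exists_satChain (v : L) : ∀ u : L, u ≤ v →
    ∃ l : List L, List.Chain' (· ⋖ ·) (u :: l) ∧
      (u :: l).getLast (List.cons_ne_nil _ _) = v := by
  have hwf : WellFounded ((· > ·) : L → L → Prop) := wellFounded_gt
  intro u
  induction u using hwf.induction with
  | _ u IH =>
    intro huv
    rcases eq_or_lt_of_le huv with rfl | hlt
    · exact ⟨[], List.isChain_singleton _, by simp⟩
    · obtain ⟨w, huw, hwv⟩ := exists_covBy_le_of_lt hlt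
      obtain ⟨l, hl, hlast⟩ := IH w huw.lt hwv
      refine ⟨w :: l, ?_, ?_⟩
      · rw [List.Chain', List.isChain_cons_cons]; exact ⟨huw, hl⟩
      · rw [List.getLast_cons (List.cons_ne_nil _ _)]; exact hlast

lemma jh_aux (hM : Semimodular L) : ∀ (k : ℕ) (u : L) (l l' : List L), l.length ≤ k →
    List.Chain' (· ⋖ ·) (u :: l) → List.Chain' (· ⋖ ·) (u :: l') →
    (u :: l).getLast (List.cons_ne_nil _ _) = (u :: l').getLast (List.cons_ne_nil _ _) →
    l.length = l'.length := by
  intro k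
  induction k with
  | zero =>
    intro u l l' hlen hc hc' hlast
    have hl : l = [] := List.eq_nil_of_length_eq_zero (Nat.le_zero.1 hlen)
    subst hl
    simp only [List.getLast_singleton] at hlast
    rw [nil_of_getLast_eq u l' hc' hlast.symm]
  | succ k IH =>
    intro u l l' hlen hc hc' hlast
    cases l with
    | nil =>
      simp only [List.getLast_singleton] at hlast
      rw [nil_of_getLast_eq u l' hc' hlast.symm]
    | cons x xs =>
      cases l' with
      | nil =>
        simp only [List.getLast_singleton] at hlast
        have := nil_of_getLast_eq u (x :: xs) hc hlast
        simp at this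
      | cons y ys =>
        rw [List.Chain', List.isChain_cons_cons] at hc hc'
        obtain ⟨hux, hcx⟩ := hc
        obtain ⟨huy, hcy⟩ := hc'
        rw [List.getLast_cons (List.cons_ne_nil _ _),
          List.getLast_cons (List.cons_ne_nil _ _)] at hlast
        by_cases hxy : x = y
        · subst hxy
          have := IH x xs ys (by simp at hlen; omega) hcx hcy hlast
          simp [this]
        · -- the semimodular step
          have hinf : x ⊓ y = u := by
            have h1 : u ≤ x ⊓ y := le_inf hux.le huy.le
            rcases eq_or_lt_of_le h1 with h | h
            · exact h.symm
            · exfalso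
              have h2 : x ⊓ y ≤ x := inf_le_left
              rcases eq_or_lt_of_le h2 with h2 | h2
              · -- x ⊓ y = x means x ≤ y, contra covers
                have hxyle : x ≤ y := by rw [← h2]; exact inf_le_right
                rcases eq_or_lt_of_le hxyle with h3 | h3
                · exact hxy h3
                · exact huy.2 hux.lt h3
              · exact hux.2 h h2
          have hxt : x ⋖ x ⊔ y := by
            have := hM y x (by rwa [inf_comm y x, hinf])
            rwa [sup_comm y x] at this
          have hyt : y ⋖ x ⊔ y := hM x y (by rwa [hinf])
          set lastv := (x :: xs).getLast (List.cons_ne_nil _ _) with hlv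
          have hxlast : x ≤ lastv := cov_head_le_getLast xs x hcx
          have hylast : y ≤ lastv := hlast ▸ cov_head_le_getLast ys y hcy
          obtain ⟨m, hm, hmlast⟩ := exists_satChain lastv (x ⊔ y) (sup_le hxlast hylast)
          have hxm : List.Chain' (· ⋖ ·) (x :: (x ⊔ y) :: m) := by
            rw [List.Chain', List.isChain_cons_cons]; exact ⟨hxt, hm⟩
          have hym : List.Chain' (· ⋖ ·) (y :: (x ⊔ y) :: m) := by
            rw [List.Chain', List.isChain_cons_cons]; exact ⟨hyt, hm⟩
          have hlen1 : xs.length ≤ k := by simp at hlen; omega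
          have e1 : xs.length = ((x ⊔ y) :: m).length := by
            apply IH x xs ((x ⊔ y) :: m) hlen1 hcx hxm
            rw [List.getLast_cons (List.cons_ne_nil _ _)]
            exact hmlast.symm ▸ rfl
          have e2 : ((x ⊔ y) :: m).length = ys.length := by
            apply IH y ((x ⊔ y) :: m) ys (by omega) hym hcy
            rw [List.getLast_cons (List.cons_ne_nil _ _)]
            rw [hmlast, ← hlast]
          simp only [List.length_cons]
          omega

lemma jh (hM : Semimodular L) (u : L) (l l' : List L)
    (hc : List.Chain' (· ⋖ ·) (u :: l)) (hc' : List.Chain' (· ⋖ ·) (u :: l'))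
    (hlast : (u :: l).getLast (List.cons_ne_nil _ _) = (u :: l').getLast (List.cons_ne_nil _ _)) :
    l.length = l'.length :=
  jh_aux hM l.length u l l' le_rfl hc hc' hlast

end Chains

section Key
variable {L : Type*} [Lattice L] {n : ℕ}

/-- If `u ⋖ v`, `u ≤ a`, `v ≰ a` then `a ⋖ a ⊔ v` in a semimodular lattice. -/
lemma covsup (hM : Semimodular L) {u v a : L} (huv : u ⋖ v) (hua : u ≤ a) (hva : ¬v ≤ a) :
    a ⋖ a ⊔ v := by
  have hinf : v ⊓ a = u := by
    have h1 : u ≤ v ⊓ a := le_inf huv.le hua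
    rcases eq_or_lt_of_le h1 with h | h
    · exact h.symm
    · exfalso
      have h2 : v ⊓ a ≤ v := inf_le_left
      rcases eq_or_lt_of_le h2 with h2 | h2
      · exact hva (h2 ▸ inf_le_right)
      · exact huv.2 h h2
  have := hM v a (by rwa [hinf])
  rwa [sup_comm] at this

variable (c d : Fin (n + 1) → L)

/-- The set of indices `j` such that `c (i+1) ≤ c i ⊔ d j`. -/
def stepSet (i : Fin n) : Set (Fin (n + 1)) :=
  {j | c i.succ ≤ c i.castSucc ⊔ d j}

/-- The key semimodularity lemma: if `j₁` is the least index with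
`c (i+1) ≤ c i ⊔ d j₁`, then `j₁ ≠ 0` and `i+1` is the least index `i'` with
`d j₁ ≤ d (j₁ - 1) ⊔ c i'`. -/
lemma key [OrderBot L] (hM : Semimodular L) (hd0 : d 0 = ⊥)
    (hcmono : Monotone c)
    (hccov : ∀ i : Fin n, c i.castSucc ⋖ c i.succ)
    (hdcov : ∀ j : Fin n, d j.castSucc ⋖ d j.succ)
    (i : Fin n) (j1 : Fin (n + 1)) (hj1 : IsLeast (stepSet c d i) j1) :
    ∃ hne : j1 ≠ 0, IsLeast (stepSet d c (j1.pred hne)) i.succ := by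
  have hne : j1 ≠ 0 := by
    rintro rfl
    have h := hj1.1
    rw [stepSet, Set.mem_setOf_eq, hd0, sup_bot_eq] at h
    exact absurd h (hccov i).lt.not_ge
  refine ⟨hne, ?_, ?_⟩
  · -- membership : d j1 ≤ d (j1-1) ⊔ c (i+1)
    set j0 := j1.pred hne with hj0
    have hj0succ : j0.succ = j1 := Fin.succ_pred _ _
    set a := c i.castSucc ⊔ d j0.castSucc with ha
    have hcia : ¬ c i.succ ≤ a := by
      intro h
      have := hj1.2 (show j0.castSucc ∈ stepSet c d i from h)
      rw [← hj0succ] at this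
      exact absurd this (Fin.castSucc_lt_succ (i := j0)).not_ge
    have hdja : ¬ d j1 ≤ a := by
      intro h
      apply hcia
      calc c i.succ ≤ c i.castSucc ⊔ d j1 := hj1.1
        _ ≤ c i.castSucc ⊔ a := sup_le_sup_left h _
        _ = a := by rw [ha]; rw [← sup_assoc, sup_idem]
    have cov1 : a ⋖ a ⊔ c i.succ := covsup hM (hccov i) le_sup_left hcia
    have cov2 : a ⋖ a ⊔ d j1 := by
      have := covsup hM (hj0succ ▸ hdcov j0) le_sup_right hdja
      exact this
    have hle : a ⊔ c i.succ ≤ a ⊔ d j1 := by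
      apply sup_le le_sup_left
      calc c i.succ ≤ c i.castSucc ⊔ d j1 := hj1.1
        _ ≤ a ⊔ d j1 := sup_le_sup_right le_sup_left _
    have heq : a ⊔ c i.succ = a ⊔ d j1 := by
      by_contra hne'
      exact cov2.2 cov1.lt (lt_of_le_of_ne hle hne')
    show d j0.succ ≤ d j0.castSucc ⊔ c i.succ
    rw [hj0succ]
    calc d j1 ≤ a ⊔ d j1 := le_sup_right
      _ = a ⊔ c i.succ := heq.symm
      _ = (c i.castSucc ⊔ d j0.castSucc) ⊔ c i.succ := rfl
      _ ≤ d j0.castSucc ⊔ c i.succ := by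
          apply sup_le (sup_le ?_ le_sup_left) le_sup_right
          exact le_trans (hcmono (Fin.castSucc_lt_succ (i := i)).le) le_sup_right
  · -- minimality
    intro i' hi'
    by_contra hlt
    push_neg at hlt
    have hile : i' ≤ i.castSucc := Fin.le_castSucc_iff.2 hlt
    set j0 := j1.pred hne with hj0
    have hj0succ : j0.succ = j1 := Fin.succ_pred _ _
    have : d j1 ≤ c i.castSucc ⊔ d j0.castSucc := by
      rw [← hj0succ]
      calc d j0.succ ≤ d j0.castSucc ⊔ c i' := hi'
        _ ≤ c i.castSucc ⊔ d j0.castSucc := sup_le le_sup_right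
            (le_sup_left.trans' (hcmono hile))
    have : c i.succ ≤ c i.castSucc ⊔ d j0.castSucc := by
      calc c i.succ ≤ c i.castSucc ⊔ d j1 := hj1.1
        _ ≤ c i.castSucc ⊔ (c i.castSucc ⊔ d j0.castSucc) := sup_le_sup_left this _
        _ = c i.castSucc ⊔ d j0.castSucc := by rw [← sup_assoc, sup_idem]
    have h2 := hj1.2 (show j0.castSucc ∈ stepSet c d i from this)
    rw [← hj0succ] at h2
    exact absurd h2 (Fin.castSucc_lt_succ (i := j0)).not_ge

end Key

namespace BetaLemmas
variable {n : ℕ} (π : Equiv.Perm (Fin n))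

lemma beta_isJoinCong : IsJoinCong (beta π) :=
  ⟨joinCongGen_equivalence _, fun a b c h θ hθ hR => hθ.2 a b c (h θ hθ hR)⟩

lemma betaGen_beta {a b : Grid n} (h : betaGen π a b) : beta π a b :=
  fun _θ _hθ hR => hR _ _ h

lemma beta_refl (a : Grid n) : beta π a a := (joinCongGen_equivalence _).refl a

lemma beta_symm {a b : Grid n} (h : beta π a b) : beta π b a :=
  (joinCongGen_equivalence _).symm h

lemma beta_trans {a b c : Grid n} (h1 : beta π a b) (h2 : beta π b c) : beta π a c :=
  (joinCongGen_equivalence _).trans h1 h2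

lemma beta_sup {a b : Grid n} (h : beta π a b) (e : Grid n) : beta π (a ⊔ e) (b ⊔ e) :=
  fun θ hθ hR => hθ.2 a b e (h θ hθ hR)

lemma beta_step_up (i : Fin n) (j : Fin (n + 1)) (h : (π i).succ ≤ j) :
    beta π (i.castSucc, j) (i.succ, j) := by
  have g : beta π (i.castSucc, (π i).succ) (i.succ, (π i).succ) :=
    betaGen_beta π ⟨i, Or.inl ⟨rfl, rfl⟩⟩
  have hs := beta_sup π g (i.castSucc, j)
  have e1 : ((i.castSucc, (π i).succ) ⊔ (i.castSucc, j) : Grid n) = (i.castSucc, j) := by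
    rw [Prod.mk_sup_mk, sup_idem, sup_eq_right.2 h]
  have e2 : ((i.succ, (π i).succ) ⊔ (i.castSucc, j) : Grid n) = (i.succ, j) := by
    rw [Prod.mk_sup_mk, sup_eq_left.2 (Fin.castSucc_lt_succ (i := i)).le, sup_eq_right.2 h]
  rwa [e1, e2] at hs

lemma beta_step_right (i : Fin (n + 1)) (j : Fin n) (h : (π.symm j).succ ≤ i) :
    beta π (i, j.castSucc) (i, j.succ) := by
  set k := π.symm j with hk
  have hpk : π k = j := π.apply_symm_apply j
  have g : beta π (k.succ, (π k).castSucc) (k.succ, (π k).succ) :=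
    betaGen_beta π ⟨k, Or.inr ⟨rfl, rfl⟩⟩
  have hs := beta_sup π g (i, j.castSucc)
  have e1 : ((k.succ, (π k).castSucc) ⊔ (i, j.castSucc) : Grid n) = (i, j.castSucc) := by
    rw [Prod.mk_sup_mk, sup_eq_right.2 h, hpk, sup_idem]
  have e2 : ((k.succ, (π k).succ) ⊔ (i, j.castSucc) : Grid n) = (i, j.succ) := by
    rw [Prod.mk_sup_mk, sup_eq_right.2 h, hpk, sup_eq_left.2 (Fin.castSucc_lt_succ (i := j)).le]
  rwa [e1, e2] at hs

end BetaLemmas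

section Lists
variable {α : Type*} [PartialOrder α]

lemma chain_finset_to_list [DecidableEq α] : ∀ (N : ℕ) (S : Finset α), S.card ≤ N →
    (∀ x ∈ S, ∀ y ∈ S, x ≤ y ∨ y ≤ x) →
    ∃ l : List α, List.Chain' (· < ·) l ∧ ∀ x, x ∈ l ↔ x ∈ S := by
  intro N
  induction N with
  | zero =>
    intro S hc _
    have : S = ∅ := Finset.card_eq_zero.1 (Nat.le_zero.1 hc)
    exact ⟨[], List.isChain_nil, by simp [this]⟩
  | succ N IH =>
    intro S hc hch
    rcases S.eq_empty_or_nonempty with rfl | hne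
    · exact ⟨[], List.isChain_nil, by simp⟩
    obtain ⟨m, hmS, hmmin⟩ := S.exists_minimal hne
    obtain ⟨l', hl', hmem'⟩ := IH (S.erase m)
      (by have := Finset.card_erase_of_mem hmS; omega)
      (fun x hx y hy => hch x (Finset.mem_of_mem_erase hx) y (Finset.mem_of_mem_erase hy))
    refine ⟨m :: l', ?_, ?_⟩
    · rw [List.Chain', List.isChain_cons]
      refine ⟨?_, hl'⟩
      intro y hy
      have hyl : y ∈ l' := List.mem_of_mem_head? hy
      have hyS : y ∈ S.erase m := (hmem' y).1 hyl
      have hyne : y ≠ m := Finset.ne_of_mem_erase hyS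
      rcases hch m hmS y (Finset.mem_of_mem_erase hyS) with h | h
      · exact lt_of_le_of_ne h (Ne.symm hyne)
      · exact absurd (le_antisymm h (hmmin (Finset.mem_of_mem_erase hyS) h)) hyne
    · intro x
      simp only [List.mem_cons, hmem', Finset.mem_erase]
      constructor
      · rintro (rfl | ⟨_, h⟩)
        · exact hmS
        · exact h
      · intro hx
        by_cases h : x = m
        · exact Or.inl h
        · exact Or.inr ⟨h, hx⟩

end Lists

section SatThrough
variable {L : Type*} [Lattice L] [Fintype L]

set_option linter.unusedSectionVars false

lemma getLast_cons_append (u a : L) (l1 l2 : List L) :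
    (u :: (l1 ++ (a :: l2))).getLast (List.cons_ne_nil _ _) =
      (a :: l2).getLast (List.cons_ne_nil _ _) := by
  induction l1 generalizing u with
  | nil => rw [List.nil_append, List.getLast_cons (List.cons_ne_nil _ _)]
  | cons b l1' ih =>
    show (u :: b :: (l1' ++ a :: l2)).getLast (List.cons_ne_nil _ _) = _
    rw [List.getLast_cons (List.cons_ne_nil _ _)]
    exact ih b

lemma exists_sat_through (v : L) : ∀ (s : List L) (u : L),
    List.Chain' (· < ·) (u :: s) → (u :: s).getLast (List.cons_ne_nil _ _) ≤ v →
    ∃ l : List L, List.Chain' (· ⋖ ·) (u :: l) ∧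
      (u :: l).getLast (List.cons_ne_nil _ _) = v ∧ ∀ x ∈ s, x ∈ l := by
  intro s
  induction s with
  | nil =>
    intro u hc hle
    simp only [List.getLast_singleton] at hle
    obtain ⟨l, hl, hlast⟩ := exists_satChain v u hle
    exact ⟨l, hl, hlast, by simp⟩
  | cons a s' IH =>
    intro u hc hle
    rw [List.Chain', List.isChain_cons_cons] at hc
    rw [List.getLast_cons (List.cons_ne_nil _ _)] at hle
    obtain ⟨l2, hl2, hlast2, hmem2⟩ := IH a hc.2 hle
    obtain ⟨l1, hl1, hlast1⟩ := exists_satChain a u hc.1.le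
    have hl1ne : l1 ≠ [] := by
      rintro rfl
      simp only [List.getLast_singleton] at hlast1
      exact absurd hlast1 hc.1.ne
    have hal1 : a ∈ l1 := by
      have h3 : l1.getLast hl1ne ∈ l1 := List.getLast_mem hl1ne
      have h4 : l1.getLast hl1ne = a := (List.getLast_cons hl1ne).symm.trans hlast1
      exact h4 ▸ h3
    cases l2 with
    | nil =>
      simp only [List.getLast_singleton] at hlast2
      subst hlast2
      refine ⟨l1, hl1, hlast1, ?_⟩
      intro x hx
      rcases List.mem_cons.1 hx with rfl | hx
      · exact hal1
      · exact absurd (hmem2 x hx) List.not_mem_nil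
    | cons b l2' =>
      refine ⟨l1 ++ (b :: l2'), ?_, ?_, ?_⟩
      · have heq : (u :: (l1 ++ b :: l2')) = (u :: l1) ++ (b :: l2') := by simp
        rw [heq]
        have hl2t : List.Chain' (· ⋖ ·) (b :: l2') := List.IsChain.tail hl2
        apply List.IsChain.append hl1 hl2t
        intro x hx y hy
        rw [List.getLast?_eq_getLast (List.cons_ne_nil _ _), Option.mem_def,
          Option.some_inj] at hx
        subst hx
        simp only [List.head?_cons, Option.mem_def, Option.some_inj] at hy
        subst hy
        rw [hlast1]
        exact (List.isChain_cons_cons.1 hl2).1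
      · rw [getLast_cons_append]
        rw [List.getLast_cons (List.cons_ne_nil _ _)] at hlast2
        exact hlast2
      · intro x hx
        rcases List.mem_cons.1 hx with rfl | hx
        · exact List.mem_append_left _ hal1
        · exact List.mem_append_right _ (hmem2 x hx)

lemma length_le_of_chain_lt {n : ℕ} (hlen : HasLength L n) (u : L) (l : List L)
    (h : List.Chain' (· < ·) (u :: l)) : l.length ≤ n := by
  have hp : List.Pairwise (· < ·) (u :: l) := List.isChain_iff_pairwise.1 h
  have hsm : StrictMono (fun i : Fin (l.length + 1) => (u :: l).get i) := by
    intro i j hij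
    rw [List.pairwise_iff_get] at hp
    exact hp _ _ hij
  exact hlen.2 l.length _ hsm

lemma nodup_of_chain_lt (l : List L) (h : List.Chain' (· < ·) l) : l.Nodup :=
  List.Pairwise.imp ne_of_lt (List.isChain_iff_pairwise.1 h)

lemma length_le_of_subset_nodup (s l : List L) (hs : s.Nodup) (hsub : ∀ x ∈ s, x ∈ l) :
    s.length ≤ l.length := by
  classical
  calc s.length = s.toFinset.card := (List.toFinset_card_of_nodup hs).symm
    _ ≤ l.toFinset.card := Finset.card_le_card (fun x hx =>
        List.mem_toFinset.2 (hsub x (List.mem_toFinset.1 hx)))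
    _ ≤ l.length := l.toFinset_card_le

end SatThrough

section GridChainsSec
variable {L : Type*} [Lattice L] [Fintype L] [BoundedOrder L]

set_option linter.unusedSectionVars false

lemma exists_gridChains {n : ℕ} (hS : Slim L) (hM : Semimodular L) (hlen : HasLength L n) :
    ∃ c d : Fin (n + 1) → L, c 0 = ⊥ ∧ d 0 = ⊥ ∧ c (Fin.last n) = ⊤ ∧ d (Fin.last n) = ⊤ ∧
      (∀ i : Fin n, c i.castSucc ⋖ c i.succ) ∧ (∀ j : Fin n, d j.castSucc ⋖ d j.succ) ∧
      (∀ p : L, JoinIrred p → (∃ i, c i = p) ∨ (∃ j, d j = p)) := by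
  classical
  set J : Finset L := Finset.univ.filter (fun p => JoinIrred p) with hJ
  have hJmem : ∀ p : L, p ∈ J ↔ JoinIrred p := by intro p; simp [hJ]
  obtain ⟨A, B, hU, hA, hB⟩ := two_chain_cover J.card J le_rfl (by
    intro a b c ha hb hc h1 h2 h3 h4 h5 h6
    exact hS ⟨a, b, c, (hJmem a).1 ha, (hJmem b).1 hb, (hJmem c).1 hc, h1, h2, h3, h4, h5, h6⟩)
  have hAJ : ∀ x ∈ A, JoinIrred x := fun x hx =>
    (hJmem x).1 (hU ▸ Finset.mem_union_left B hx)
  have hBJ : ∀ x ∈ B, JoinIrred x := fun x hx =>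
    (hJmem x).1 (hU ▸ Finset.mem_union_right A hx)
  obtain ⟨lA, hlA, hmemA⟩ := chain_finset_to_list A.card A le_rfl hA
  obtain ⟨lB, hlB, hmemB⟩ := chain_finset_to_list B.card B le_rfl hB
  -- saturated chains from ⊥ to ⊤ through lA and lB
  have hchA : List.Chain' (· < ·) (⊥ :: lA) := by
    rw [List.Chain', List.isChain_cons]
    refine ⟨?_, hlA⟩
    intro y hy
    have : y ∈ A := (hmemA y).1 (List.mem_of_mem_head? hy)
    exact bot_lt_iff_ne_bot.2 (hAJ y this).1
  have hchB : List.Chain' (· < ·) (⊥ :: lB) := by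
    rw [List.Chain', List.isChain_cons]
    refine ⟨?_, hlB⟩
    intro y hy
    have : y ∈ B := (hmemB y).1 (List.mem_of_mem_head? hy)
    exact bot_lt_iff_ne_bot.2 (hBJ y this).1
  obtain ⟨lC, hlC, hlastC, hsubA⟩ := exists_sat_through ⊤ lA ⊥ hchA le_top
  obtain ⟨lD, hlD, hlastD, hsubB⟩ := exists_sat_through ⊤ lB ⊥ hchB le_top
  -- a reference saturated chain of length ≥ n
  obtain ⟨x, hx⟩ := hlen.1
  have hchain_ofFn : List.Chain' (· < ·) (List.ofFn x) := by
    rw [List.Chain', List.isChain_iff_pairwise, List.pairwise_iff_get]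
    intro i j hij
    rw [List.get_ofFn, List.get_ofFn]
    apply hx
    rw [Fin.lt_def, Fin.coe_cast, Fin.coe_cast]
    exact hij
  have href : ∃ lE : List L, List.Chain' (· ⋖ ·) (⊥ :: lE) ∧
      (⊥ :: lE).getLast (List.cons_ne_nil _ _) = ⊤ ∧ n ≤ lE.length := by
    by_cases h0 : x 0 = ⊥
    · have hofn : List.ofFn x = x 0 :: List.ofFn (fun i => x i.succ) := List.ofFn_succ (f := x)
      rw [hofn, h0] at hchain_ofFn
      obtain ⟨lE, h1, h2, h3⟩ := exists_sat_through ⊤ (List.ofFn fun i => x i.succ) ⊥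
        hchain_ofFn le_top
      refine ⟨lE, h1, h2, ?_⟩
      have hnd : (List.ofFn fun i => x i.succ).Nodup :=
        nodup_of_chain_lt _ (List.IsChain.tail hchain_ofFn)
      have := length_le_of_subset_nodup _ _ hnd h3
      simpa using this
    · have hch : List.Chain' (· < ·) (⊥ :: List.ofFn x) := by
        rw [List.Chain', List.isChain_cons]
        refine ⟨?_, hchain_ofFn⟩
        intro y hy
        rw [List.ofFn_succ (f := x), List.head?_cons, Option.mem_def, Option.some_inj] at hy
        subst hy
        exact bot_lt_iff_ne_bot.2 h0
      obtain ⟨lE, h1, h2, h3⟩ := exists_sat_through ⊤ (List.ofFn x) ⊥ hch le_top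
      refine ⟨lE, h1, h2, ?_⟩
      have hnd : (List.ofFn x).Nodup := nodup_of_chain_lt _ hchain_ofFn
      have := length_le_of_subset_nodup _ _ hnd h3
      simp only [List.length_ofFn] at this
      omega
  obtain ⟨lE, hlE, hlastE, hlEge⟩ := href
  have hlEle : lE.length ≤ n := length_le_of_chain_lt hlen ⊥ lE (cov_chain_lt _ hlE)
  have hlEn : lE.length = n := le_antisymm hlEle hlEge
  have hlCn : lC.length = n := by
    have := jh hM ⊥ lC lE hlC hlE (by rw [hlastC, hlastE])
    omega
  have hlDn : lD.length = n := by
    have := jh hM ⊥ lD lE hlD hlE (by rw [hlastD, hlastE])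
    omega
  have hlenC : (⊥ :: lC).length = n + 1 := by simp [hlCn]
  have hlenD : (⊥ :: lD).length = n + 1 := by simp [hlDn]
  refine ⟨fun i => (⊥ :: lC).get (Fin.cast hlenC.symm i),
          fun j => (⊥ :: lD).get (Fin.cast hlenD.symm j), ?_, ?_, ?_, ?_, ?_, ?_, ?_⟩
  · rfl
  · rfl
  · show (⊥ :: lC).get (Fin.cast hlenC.symm (Fin.last n)) = ⊤
    have e : Fin.cast hlenC.symm (Fin.last n) = ⟨(⊥ :: lC).length - 1, by simp⟩ := by
      ext; simp [hlCn]
    rw [e, List.get_eq_getElem, ← List.getLast_eq_getElem]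
    exact hlastC
  · show (⊥ :: lD).get (Fin.cast hlenD.symm (Fin.last n)) = ⊤
    have e : Fin.cast hlenD.symm (Fin.last n) = ⟨(⊥ :: lD).length - 1, by simp⟩ := by
      ext; simp [hlDn]
    rw [e, List.get_eq_getElem, ← List.getLast_eq_getElem]
    exact hlastD
  · intro i
    show (⊥ :: lC).get (Fin.cast hlenC.symm i.castSucc) ⋖ (⊥ :: lC).get (Fin.cast hlenC.symm i.succ)
    have hi : i.val < (⊥ :: lC).length - 1 := by simp only [List.length_cons, hlCn]; omega
    have h := List.isChain_iff_getElem.1 hlC i.val (by omega)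
    have e1 : Fin.cast hlenC.symm i.castSucc = ⟨i.val, by simp only [List.length_cons, hlCn]; omega⟩ := by ext; simp
    have e2 : Fin.cast hlenC.symm i.succ = ⟨i.val + 1, by simp only [List.length_cons, hlCn]; omega⟩ := by ext; simp
    rw [e1, e2]
    exact h
  · intro j
    show (⊥ :: lD).get (Fin.cast hlenD.symm j.castSucc) ⋖ (⊥ :: lD).get (Fin.cast hlenD.symm j.succ)
    have hj : j.val < (⊥ :: lD).length - 1 := by simp only [List.length_cons, hlDn]; omega
    have h := List.isChain_iff_getElem.1 hlD j.val (by omega)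
    have e1 : Fin.cast hlenD.symm j.castSucc = ⟨j.val, by simp only [List.length_cons, hlDn]; omega⟩ := by ext; simp
    have e2 : Fin.cast hlenD.symm j.succ = ⟨j.val + 1, by simp only [List.length_cons, hlDn]; omega⟩ := by ext; simp
    rw [e1, e2]
    exact h
  · intro p hp
    have hpJ : p ∈ J := (hJmem p).2 hp
    rw [← hU] at hpJ
    rcases Finset.mem_union.1 hpJ with hpA | hpB
    · left
      have : p ∈ (⊥ :: lC) := List.mem_cons_of_mem _ (hsubA p ((hmemA p).2 hpA))
      obtain ⟨k, hk⟩ := List.mem_iff_get.1 this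
      refine ⟨Fin.cast hlenC k, ?_⟩
      show (⊥ :: lC).get (Fin.cast hlenC.symm (Fin.cast hlenC k)) = p
      have e : Fin.cast hlenC.symm (Fin.cast hlenC k) = k := by ext; simp
      rw [e]; exact hk
    · right
      have : p ∈ (⊥ :: lD) := List.mem_cons_of_mem _ (hsubB p ((hmemB p).2 hpB))
      obtain ⟨k, hk⟩ := List.mem_iff_get.1 this
      refine ⟨Fin.cast hlenD k, ?_⟩
      show (⊥ :: lD).get (Fin.cast hlenD.symm (Fin.cast hlenD k)) = p
      have e : Fin.cast hlenD.symm (Fin.cast hlenD k) = k := by ext; simp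
      rw [e]; exact hk

end GridChainsSec


open BetaLemmas

/-- every slim semimodular lattice of length `n ≥ 1` is order-isomorphic
to `G_n/β_π` for some permutation `π` of `{1,…,n}`. -/
theorem slim_semimodular_iso_quotGrid
    {L : Type*} [Lattice L] [Fintype L] [BoundedOrder L] {n : ℕ} (hn : 1 ≤ n)
    (hS : Slim L) (hM : Semimodular L) (hlen : HasLength L n) :
    ∃ π : Equiv.Perm (Fin n), Nonempty (L ≃o QuotGrid π) := by
  classical
  obtain ⟨c, d, hc0, hd0, hcn, hdn, hccov, hdcov, hji⟩ := exists_gridChains hS hM hlen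
  have hcstrict : StrictMono c := Fin.strictMono_iff_lt_succ.2 (fun i => (hccov i).lt)
  have hdstrict : StrictMono d := Fin.strictMono_iff_lt_succ.2 (fun j => (hdcov j).lt)
  have hcmono : Monotone c := hcstrict.monotone
  have hdmono : Monotone d := hdstrict.monotone
  have csup : ∀ i i' : Fin (n + 1), c (i ⊔ i') = c i ⊔ c i' := by
    intro i i'
    rcases le_total i i' with h | h
    · rw [sup_eq_right.2 h, sup_eq_right.2 (hcmono h)]
    · rw [sup_eq_left.2 h, sup_eq_left.2 (hcmono h)]
  have dsup : ∀ j j' : Fin (n + 1), d (j ⊔ j') = d j ⊔ d j' := by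
    intro j j'
    rcases le_total j j' with h | h
    · rw [sup_eq_right.2 h, sup_eq_right.2 (hdmono h)]
    · rw [sup_eq_left.2 h, sup_eq_left.2 (hdmono h)]
  -- least indices
  have hFne : ∀ i : Fin n, ((Finset.univ : Finset (Fin (n+1))).filter
      (fun j => c i.succ ≤ c i.castSucc ⊔ d j)).Nonempty :=
    fun i => ⟨Fin.last n, by simp [hdn]⟩
  have hGne : ∀ j : Fin n, ((Finset.univ : Finset (Fin (n+1))).filter
      (fun i => d j.succ ≤ d j.castSucc ⊔ c i)).Nonempty :=
    fun j => ⟨Fin.last n, by simp [hcn]⟩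
  set F : Fin n → Fin (n+1) := fun i => (((Finset.univ : Finset (Fin (n+1))).filter
      (fun j => c i.succ ≤ c i.castSucc ⊔ d j)).min' (hFne i)) with hF
  set G : Fin n → Fin (n+1) := fun j => (((Finset.univ : Finset (Fin (n+1))).filter
      (fun i => d j.succ ≤ d j.castSucc ⊔ c i)).min' (hGne j)) with hG
  have hFleast : ∀ i, IsLeast (stepSet c d i) (F i) := by
    intro i
    constructor
    · have := Finset.min'_mem _ (hFne i)
      exact (Finset.mem_filter.1 this).2
    · intro j hj
      exact Finset.min'_le _ j (Finset.mem_filter.2 ⟨Finset.mem_univ _, hj⟩)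
  have hGleast : ∀ j, IsLeast (stepSet d c j) (G j) := by
    intro j
    constructor
    · have := Finset.min'_mem _ (hGne j)
      exact (Finset.mem_filter.1 this).2
    · intro i hi
      exact Finset.min'_le _ i (Finset.mem_filter.2 ⟨Finset.mem_univ _, hi⟩)
  have hkeyF : ∀ i : Fin n, ∃ hne : F i ≠ 0, IsLeast (stepSet d c ((F i).pred hne)) i.succ :=
    fun i => key c d hM hd0 hcmono hccov hdcov i (F i) (hFleast i)
  have hkeyG : ∀ j : Fin n, ∃ hne : G j ≠ 0, IsLeast (stepSet c d ((G j).pred hne)) j.succ :=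
    fun j => key d c hM hc0 hdmono hdcov hccov j (G j) (hGleast j)
  set f : Fin n → Fin n := fun i => (F i).pred (hkeyF i).choose with hf
  set g : Fin n → Fin n := fun j => (G j).pred (hkeyG j).choose with hg
  have hfsucc : ∀ i, (f i).succ = F i := fun i => Fin.succ_pred _ _
  have hgsucc : ∀ j, (g j).succ = G j := fun j => Fin.succ_pred _ _
  have hgf : ∀ i, g (f i) = i := by
    intro i
    have heq : G (f i) = i.succ := (hGleast (f i)).unique (hkeyF i).choose_spec
    apply Fin.ext
    show ((G (f i)).pred _).val = i.val
    rw [Fin.coe_pred, heq, Fin.val_succ]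
    omega
  have hfg : ∀ j, f (g j) = j := by
    intro j
    have heq : F (g j) = j.succ := (hFleast (g j)).unique (hkeyG j).choose_spec
    apply Fin.ext
    show ((F (g j)).pred _).val = j.val
    rw [Fin.coe_pred, heq, Fin.val_succ]
    omega
  set π : Equiv.Perm (Fin n) := ⟨f, g, hgf, hfg⟩ with hπdef
  have hπ : ∀ i, π i = f i := fun _ => rfl
  have hπsymm : ∀ j, π.symm j = g j := fun _ => rfl
  -- basic facts about F, G and π
  have hFspec : ∀ i : Fin n, c i.succ ≤ c i.castSucc ⊔ d (π i).succ := by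
    intro i
    rw [hπ, hfsucc]
    exact (hFleast i).1
  have hdstep : ∀ i : Fin n, d (π i).succ ≤ d (π i).castSucc ⊔ c i.succ := by
    intro i
    exact (hkeyF i).choose_spec.1
  have hFmin : ∀ (i : Fin n) (j' : Fin (n+1)), c i.succ ≤ c i.castSucc ⊔ d j' →
      (π i).succ ≤ j' := by
    intro i j' hj'
    rw [hπ, hfsucc]
    exact (hFleast i).2 hj'
  have hGmin : ∀ (j : Fin n) (i' : Fin (n+1)), d j.succ ≤ d j.castSucc ⊔ c i' →
      (π.symm j).succ ≤ i' := by
    intro j i' hi'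
    rw [hπsymm, hgsucc]
    exact (hGleast j).2 hi'
  -- the grid map
  set φ : Grid n → L := fun p => c p.1 ⊔ d p.2 with hφ
  have hφsup : ∀ p q : Grid n, φ (p ⊔ q) = φ p ⊔ φ q := by
    intro p q
    show c (p.1 ⊔ q.1) ⊔ d (p.2 ⊔ q.2) = (c p.1 ⊔ d p.2) ⊔ (c q.1 ⊔ d q.2)
    rw [csup, dsup, sup_sup_sup_comm]
  have hgen : ∀ p q : Grid n, betaGen π p q → φ p = φ q := by
    rintro p q ⟨i, ⟨rfl, rfl⟩ | ⟨rfl, rfl⟩⟩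
    · show c i.castSucc ⊔ d (π i).succ = c i.succ ⊔ d (π i).succ
      apply le_antisymm
      · exact sup_le_sup_right (hcmono (Fin.castSucc_lt_succ (i := i)).le) _
      · exact sup_le (hFspec i) le_sup_right
    · show c i.succ ⊔ d (π i).castSucc = c i.succ ⊔ d (π i).succ
      apply le_antisymm
      · exact sup_le_sup_left (hdmono (Fin.castSucc_lt_succ (i := _)).le) _
      · refine sup_le le_sup_left ?_
        exact (hdstep i).trans (sup_le le_sup_right le_sup_left)
  have hbeta_ker : ∀ p q : Grid n, beta π p q → φ p = φ q := by
    intro p q h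
    exact h (fun p q => φ p = φ q)
      ⟨⟨fun _ => rfl, fun h => h.symm, fun h1 h2 => h1.trans h2⟩,
        fun a b e h => by show φ (a ⊔ e) = φ (b ⊔ e); rw [hφsup, hφsup, h]⟩ hgen
  -- the coordinates of an element of L
  have hIne : ∀ z : L, ((Finset.univ : Finset (Fin (n+1))).filter (fun i => c i ≤ z)).Nonempty :=
    fun z => ⟨0, by simp [hc0]⟩
  have hJne : ∀ z : L, ((Finset.univ : Finset (Fin (n+1))).filter (fun j => d j ≤ z)).Nonempty :=
    fun z => ⟨0, by simp [hd0]⟩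
  set I : L → Fin (n+1) := fun z => (((Finset.univ : Finset (Fin (n+1))).filter
      (fun i => c i ≤ z)).max' (hIne z)) with hI
  set J : L → Fin (n+1) := fun z => (((Finset.univ : Finset (Fin (n+1))).filter
      (fun j => d j ≤ z)).max' (hJne z)) with hJd
  have hIle : ∀ z : L, c (I z) ≤ z := by
    intro z
    have := Finset.max'_mem _ (hIne z)
    exact (Finset.mem_filter.1 this).2
  have hJle : ∀ z : L, d (J z) ≤ z := by
    intro z
    have := Finset.max'_mem _ (hJne z)
    exact (Finset.mem_filter.1 this).2
  have hIge : ∀ (z : L) (i : Fin (n+1)), c i ≤ z → i ≤ I z := by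
    intro z i hi
    exact Finset.le_max' _ i (Finset.mem_filter.2 ⟨Finset.mem_univ _, hi⟩)
  have hJge : ∀ (z : L) (j : Fin (n+1)), d j ≤ z → j ≤ J z := by
    intro z j hj
    exact Finset.le_max' _ j (Finset.mem_filter.2 ⟨Finset.mem_univ _, hj⟩)
  -- every element decomposes
  have hdec : ∀ z : L, z ≤ c (I z) ⊔ d (J z) := by
    intro z
    induction z using (wellFounded_lt (α := L)).induction with
    | _ z IH =>
    by_cases hzbot : z = ⊥
    · subst hzbot; exact bot_le
    by_cases hzji : JoinIrred z
    · rcases hji z hzji with ⟨i, rfl⟩ | ⟨j, rfl⟩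
      · exact le_trans (hcmono (hIge (c i) i le_rfl)) le_sup_left
      · exact le_trans (hdmono (hJge (d j) j le_rfl)) le_sup_right
    · rw [JoinIrred] at hzji
      push_neg at hzji
      obtain ⟨a, b, hzab, hza, hzb⟩ := hzji hzbot
      have ha : a < z := lt_of_le_of_ne (hzab ▸ le_sup_left) (fun h => hza h.symm)
      have hb : b < z := lt_of_le_of_ne (hzab ▸ le_sup_right) (fun h => hzb h.symm)
      have hIa : I a ≤ I z := hIge z _ ((hIle a).trans ha.le)
      have hJa : J a ≤ J z := hJge z _ ((hJle a).trans ha.le)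
      have hIb : I b ≤ I z := hIge z _ ((hIle b).trans hb.le)
      have hJb : J b ≤ J z := hJge z _ ((hJle b).trans hb.le)
      calc z = a ⊔ b := hzab
        _ ≤ (c (I a) ⊔ d (J a)) ⊔ (c (I b) ⊔ d (J b)) := sup_le_sup (IH a ha) (IH b hb)
        _ ≤ c (I z) ⊔ d (J z) := by
            apply sup_le <;> apply sup_le
            · exact (hcmono hIa).trans le_sup_left
            · exact (hdmono hJa).trans le_sup_right
            · exact (hcmono hIb).trans le_sup_left
            · exact (hdmono hJb).trans le_sup_right
  have hIJeq : ∀ z : L, c (I z) ⊔ d (J z) = z :=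
    fun z => le_antisymm (sup_le (hIle z) (hJle z)) (hdec z)
  -- climbing within a β-class
  have hclimb_d : ∀ (m : ℕ) (i j j' : Fin (n+1)), j'.val ≤ j.val + m → j ≤ j' →
      d j' ≤ c i ⊔ d j → beta π (i, j) (i, j') := by
    intro m
    induction m with
    | zero =>
      intro i j j' hm hle _
      have : j = j' := le_antisymm hle (by rw [Fin.le_def]; omega)
      subst this
      exact beta_refl π _
    | succ m IH =>
      intro i j j' hm hle hdd
      by_cases heq : j = j'
      · subst heq; exact beta_refl π _
      have hlt : j < j' := lt_of_le_of_ne hle heq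
      have hne0 : j' ≠ 0 := by
        rintro rfl
        exact absurd hlt (Fin.not_lt_zero j).elim
      set j0 := j'.pred hne0 with hj0def
      have hj0 : j0.succ = j' := Fin.succ_pred _ _
      have hjj0 : j ≤ j0.castSucc := Fin.le_castSucc_iff.2 (hj0 ▸ hlt)
      have hc0le : d j0.castSucc ≤ c i ⊔ d j := by
        refine le_trans (hdmono ?_) hdd
        rw [← hj0]
        exact (Fin.castSucc_lt_succ (i := j0)).le
      have step1 : beta π (i, j) (i, j0.castSucc) := by
        apply IH i j j0.castSucc ?_ hjj0 hc0le
        have h1 : j0.castSucc.val = j'.val - 1 := by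
          rw [Fin.coe_castSucc, hj0def, Fin.coe_pred]
        have h2 : 1 ≤ j'.val := by
          rcases Nat.eq_zero_or_pos j'.val with h | h
          · exact absurd (Fin.ext h : j' = 0) hne0
          · exact h
        omega
      have hmem : d j0.succ ≤ d j0.castSucc ⊔ c i := by
        rw [hj0]
        exact hdd.trans (sup_le le_sup_right ((hdmono hjj0).trans le_sup_left))
      have hstep : beta π (i, j0.castSucc) (i, j0.succ) :=
        beta_step_right π i j0 (hGmin j0 i hmem)
      exact beta_trans π step1 (hj0 ▸ hstep)
  have hclimb_c : ∀ (m : ℕ) (j i i' : Fin (n+1)), i'.val ≤ i.val + m → i ≤ i' →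
      c i' ≤ c i ⊔ d j → beta π (i, j) (i', j) := by
    intro m
    induction m with
    | zero =>
      intro j i i' hm hle _
      have : i = i' := le_antisymm hle (by rw [Fin.le_def]; omega)
      subst this
      exact beta_refl π _
    | succ m IH =>
      intro j i i' hm hle hcc
      by_cases heq : i = i'
      · subst heq; exact beta_refl π _
      have hlt : i < i' := lt_of_le_of_ne hle heq
      have hne0 : i' ≠ 0 := by
        rintro rfl
        exact absurd hlt (Fin.not_lt_zero i).elim
      set i0 := i'.pred hne0 with hi0def
      have hi0 : i0.succ = i' := Fin.succ_pred _ _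
      have hii0 : i ≤ i0.castSucc := Fin.le_castSucc_iff.2 (hi0 ▸ hlt)
      have hc0le : c i0.castSucc ≤ c i ⊔ d j := by
        refine le_trans (hcmono ?_) hcc
        rw [← hi0]
        exact (Fin.castSucc_lt_succ (i := i0)).le
      have step1 : beta π (i, j) (i0.castSucc, j) := by
        apply IH j i i0.castSucc ?_ hii0 hc0le
        have h1 : i0.castSucc.val = i'.val - 1 := by
          rw [Fin.coe_castSucc, hi0def, Fin.coe_pred]
        have h2 : 1 ≤ i'.val := by
          rcases Nat.eq_zero_or_pos i'.val with h | h
          · exact absurd (Fin.ext h : i' = 0) hne0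
          · exact h
        omega
      have hmem : c i0.succ ≤ c i0.castSucc ⊔ d j := by
        rw [hi0]
        exact hcc.trans (sup_le ((hcmono hii0).trans le_sup_left) le_sup_right)
      have hstep : beta π (i0.castSucc, j) (i0.succ, j) :=
        beta_step_up π i0 j (hFmin i0 j hmem)
      exact beta_trans π step1 (hi0 ▸ hstep)
  -- every point is β-related to the closure point of its image
  have hclosure : ∀ p : Grid n, beta π p (I (φ p), J (φ p)) := by
    rintro ⟨i, j⟩
    set z := φ (i, j) with hz
    have hiz : c i ≤ z := le_sup_left
    have hjz : d j ≤ z := le_sup_right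
    have hjJ : j ≤ J z := hJge z j hjz
    have hiI : i ≤ I z := hIge z i hiz
    have s1 : beta π (i, j) (i, J z) := by
      apply hclimb_d n i j (J z) (by have := (J z).is_le; omega) hjJ
      exact hJle z
    have s2 : beta π (i, J z) (I z, J z) := by
      apply hclimb_c n (J z) i (I z) (by have := (I z).is_le; omega) hiI
      exact (hIle z).trans (le_trans (le_of_eq hz) (sup_le_sup_left (hdmono hjJ) _))
    exact beta_trans π s1 s2
  have hker_beta : ∀ p q : Grid n, φ p = φ q → beta π p q := by
    intro p q h
    have h1 := hclosure p
    have h2 := hclosure q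
    rw [h] at h1
    exact beta_trans π h1 (beta_symm π h2)
  -- assemble the order isomorphism
  refine ⟨π, ⟨?_⟩⟩
  have hlift : ∀ (p q : Grid n), (betaSetoid π).r p q → φ p = φ q := fun p q h =>
    hbeta_ker p q h
  refine ⟨⟨fun z => Quotient.mk (betaSetoid π) (I z, J z), Quotient.lift φ hlift, ?_, ?_⟩, ?_⟩
  · -- left inverse
    intro z
    show φ (I z, J z) = z
    exact hIJeq z
  · -- right inverse
    intro q
    induction q using Quotient.ind with
    | _ p =>
    show Quotient.mk (betaSetoid π) (I (φ p), J (φ p)) = Quotient.mk (betaSetoid π) p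
    exact Quotient.sound (beta_symm π (hclosure p))
  · -- order preservation
    intro a b
    constructor
    · rintro ⟨p, q, hp, hq, hpq⟩
      have hap : beta π (I a, J a) p := Quotient.exact hp
      have hbq : beta π (I b, J b) q := Quotient.exact hq
      have hφp : φ p = a := by rw [← hbeta_ker _ _ hap]; exact hIJeq a
      have hφq : φ q = b := by rw [← hbeta_ker _ _ hbq]; exact hIJeq b
      have := hbeta_ker _ _ hpq
      rw [hφsup, hφp, hφq] at this
      exact le_of_sup_eq this
    · intro hab
      refine ⟨(I a, J a), (I b, J b), rfl, rfl, ?_⟩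
      apply hker_beta
      rw [hφsup]
      show φ (I a, J a) ⊔ φ (I b, J b) = φ (I b, J b)
      have e1 : φ (I a, J a) = a := hIJeq a
      have e2 : φ (I b, J b) = b := hIJeq b
      rw [e1, e2]
      exact sup_eq_right.2 hab
end

section
/- For every σ ∈ S_n, the set Seg σ of segments of σ is a partition of {1,…,n}: every element of {1,…,n} belongs to exactly one segment of σ. -/
/-- `I` is closed with respect to `σ`: `σ i ∈ I` for all `i ∈ I`. -/
def PermClosed {n : ℕ} (σ : Equiv.Perm (Fin n)) (I : Set (Fin n)) : Prop :=
  ∀ i ∈ I, σ i ∈ I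

/-- `I` is a section of `σ`: a nonempty interval `{u,…,v}` such that `I`, `{x | x < u}`
and `{x | v < x}` are all closed with respect to `σ`. -/
def IsSection {n : ℕ} (σ : Equiv.Perm (Fin n)) (I : Set (Fin n)) : Prop :=
  ∃ u v : Fin n, u ≤ v ∧ I = Set.Icc u v ∧
    PermClosed σ I ∧ PermClosed σ {x | x < u} ∧ PermClosed σ {x | v < x}

/-- `I` is a segment of `σ`: a section minimal with respect to inclusion. -/
def IsSegment {n : ℕ} (σ : Equiv.Perm (Fin n)) (I : Set (Fin n)) : Prop :=
  IsSection σ I ∧ ∀ J : Set (Fin n), IsSection σ J → J ⊆ I → J = I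

/-- `Seg σ`, the set of all segments of `σ`. -/
def Seg {n : ℕ} (σ : Equiv.Perm (Fin n)) : Set (Set (Fin n)) :=
  {I | IsSegment σ I}

/-- `σ` and `μ` are sectionally inverted or equal: they have the same segments and on
each segment `μ` coincides with `σ` or with `σ⁻¹`. -/
def Rho {n : ℕ} (σ μ : Equiv.Perm (Fin n)) : Prop :=
  Seg σ = Seg μ ∧ ∀ I ∈ Seg σ, (∀ i ∈ I, μ i = σ i) ∨ (∀ i ∈ I, μ i = σ⁻¹ i)

section Aux

variable {n : ℕ} (σ : Equiv.Perm (Fin n))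

lemma permClosed_compl {A : Set (Fin n)} (h : PermClosed σ A) : PermClosed σ Aᶜ := by
  intro i hi hmem
  have hA : Set.MapsTo σ A A := h
  have hbij : Set.BijOn σ A A :=
    (Set.Finite.injOn_iff_bijOn_of_mapsTo (Set.toFinite A) hA).mp (σ.injective.injOn)
  obtain ⟨j, hj, hji⟩ := hbij.surjOn hmem
  exact hi (σ.injective hji ▸ hj)

/-- `Cut σ t`: the set of elements below the natural-number threshold `t` is closed. -/
def Cut (t : ℕ) : Prop := PermClosed σ {x : Fin n | x.val < t}

lemma cut_zero : Cut σ 0 := fun _ hi => absurd hi (Nat.not_lt_zero _)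

lemma cut_n : Cut σ n := fun i _ => (σ i).isLt

lemma cut_ge (t : ℕ) (h : Cut σ t) : PermClosed σ {x : Fin n | t ≤ x.val} := by
  have h2 := permClosed_compl σ h
  have e : {x : Fin n | t ≤ x.val} = {x : Fin n | x.val < t}ᶜ := by
    ext x; simp [not_lt]
  rw [e]; exact h2

lemma isSection_iff (I : Set (Fin n)) :
    IsSection σ I ↔ ∃ a b : ℕ, a < b ∧ b ≤ n ∧
      I = {x : Fin n | a ≤ x.val ∧ x.val < b} ∧ Cut σ a ∧ Cut σ b := by
  constructor
  · rintro ⟨u, v, huv, hI, hIc, hlt, hgt⟩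
    refine ⟨u.val, v.val + 1, by exact Nat.lt_succ_of_le huv, v.isLt, ?_, ?_, ?_⟩
    · rw [hI]; ext x
      simp only [Set.mem_Icc, Set.mem_setOf_eq, Fin.le_def]
      omega
    · have e : {x : Fin n | x.val < u.val} = {x : Fin n | x < u} := by
        ext x; exact (Fin.lt_def).symm
      rw [Cut, e]; exact hlt
    · have h2 := permClosed_compl σ hgt
      have e : {x : Fin n | x.val < v.val + 1} = {x : Fin n | v < x}ᶜ := by
        ext x
        simp only [Set.mem_setOf_eq, Set.mem_compl_iff, Fin.lt_def, not_lt]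
        omega
      rw [Cut, e]; exact h2
  · rintro ⟨a, b, hab, hbn, hIeq, hca, hcb⟩
    refine ⟨⟨a, by omega⟩, ⟨b - 1, by omega⟩, ?_, ?_, ?_, ?_, ?_⟩
    · simp only [Fin.le_def]; omega
    · rw [hIeq]; ext x
      simp only [Set.mem_setOf_eq, Set.mem_Icc, Fin.le_def]
      omega
    · rw [hIeq]
      intro i hi
      exact ⟨cut_ge σ a hca i hi.1, hcb i hi.2⟩
    · have e : {x : Fin n | x < (⟨a, by omega⟩ : Fin n)} = {x : Fin n | x.val < a} := by
        ext x; simp [Fin.lt_def]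
      rw [e]; exact hca
    · have h2 := permClosed_compl σ hcb
      have e : {x : Fin n | (⟨b - 1, by omega⟩ : Fin n) < x} = {x : Fin n | x.val < b}ᶜ := by
        ext x; simp only [Set.mem_setOf_eq, Set.mem_compl_iff, Fin.lt_def, not_lt]
        omega
      rw [e]; exact h2

end Aux

/-- the segments of `σ` form a partition of `{1,…,n}`: every element
belongs to exactly one segment. -/
theorem seg_partition {n : ℕ} (σ : Equiv.Perm (Fin n)) (k : Fin n) :
    ∃! I : Set (Fin n), IsSegment σ I ∧ k ∈ I := by
  classical
  have hA : ∃ s, Cut σ (k.val - s) :=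
    ⟨k.val, by rw [Nat.sub_self]; exact cut_zero σ⟩
  have hfind : Nat.find hA ≤ k.val :=
    Nat.find_le (by rw [Nat.sub_self]; exact cut_zero σ)
  set a := k.val - Nat.find hA with ha_def
  have hca : Cut σ a := Nat.find_spec hA
  have hak : a ≤ k.val := Nat.sub_le _ _
  have hamax : ∀ t, t ≤ k.val → Cut σ t → t ≤ a := by
    intro t htk hct
    by_contra hlt
    push_neg at hlt
    have h1 : k.val - t < Nat.find hA := by omega
    exact Nat.find_min hA h1 (by rwa [show k.val - (k.val - t) = t by omega])
  have hB : ∃ t, k.val < t ∧ t ≤ n ∧ Cut σ t := ⟨n, k.isLt, le_refl n, cut_n σ⟩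
  set b := Nat.find hB with hb_def
  obtain ⟨hkb, hbn, hcb⟩ : k.val < b ∧ b ≤ n ∧ Cut σ b := Nat.find_spec hB
  have hbmin : ∀ t, k.val < t → Cut σ t → b ≤ t := by
    intro t h1 h2
    by_contra h
    push_neg at h
    exact Nat.find_min hB h ⟨h1, by omega, h2⟩
  set I : Set (Fin n) := {x | a ≤ x.val ∧ x.val < b} with hI_def
  have hsecI : IsSection σ I :=
    (isSection_iff σ I).mpr ⟨a, b, by omega, hbn, rfl, hca, hcb⟩
  have hmin : ∀ J, IsSection σ J → J ⊆ I → J = I := by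
    intro J hJ hJI
    obtain ⟨a', b', hab', hb'n, hJeq, hca', hcb'⟩ := (isSection_iff σ J).mp hJ
    have hx1 : (⟨a', by omega⟩ : Fin n) ∈ J := by
      rw [hJeq]; exact ⟨le_refl _, hab'⟩
    have hx2 : (⟨b' - 1, by omega⟩ : Fin n) ∈ J := by
      rw [hJeq]
      show a' ≤ b' - 1 ∧ b' - 1 < b'
      exact ⟨by omega, by omega⟩
    have h1 : a ≤ a' ∧ a' < b := hJI hx1
    have h2 : a ≤ b' - 1 ∧ b' - 1 < b := hJI hx2
    have haa : a = a' := by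
      by_contra hne
      have hlt : a < a' := lt_of_le_of_ne h1.1 hne
      rcases le_or_gt a' k.val with hc | hc
      · exact absurd (hamax a' hc hca') (by omega)
      · exact absurd (hbmin a' hc hca') (by omega)
    have hbb : b = b' := by
      have hble : b' ≤ b := by omega
      by_contra hne
      have hlt : b' < b := lt_of_le_of_ne hble (fun h => hne h.symm)
      rcases le_or_gt b' k.val with hc | hc
      · exact absurd (hamax b' hc hcb') (by omega)
      · exact absurd (hbmin b' hc hcb') (by omega)
    rw [hJeq, hI_def, ← haa, ← hbb]
  have hsegI : IsSegment σ I := ⟨hsecI, hmin⟩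
  have hkI : k ∈ I := ⟨hak, hkb⟩
  refine ⟨I, ⟨hsegI, hkI⟩, ?_⟩
  rintro J ⟨⟨hJsec, hJmin⟩, hkJ⟩
  obtain ⟨a', b', hab', hb'n, hJeq, hca', hcb'⟩ := (isSection_iff σ J).mp hJsec
  have hkJ' : a' ≤ k.val ∧ k.val < b' := by rw [hJeq] at hkJ; exact hkJ
  set K : Set (Fin n) := {x | max a a' ≤ x.val ∧ x.val < min b b'} with hK_def
  have hcmax : Cut σ (max a a') := by
    rcases le_total a a' with h | h
    · rw [max_eq_right h]; exact hca'
    · rw [max_eq_left h]; exact hca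
  have hcmin : Cut σ (min b b') := by
    rcases le_total b b' with h | h
    · rw [min_eq_left h]; exact hcb
    · rw [min_eq_right h]; exact hcb'
  have hsecK : IsSection σ K :=
    (isSection_iff σ K).mpr ⟨max a a', min b b', by omega, by omega, rfl, hcmax, hcmin⟩
  have hKJ : K ⊆ J := by
    rw [hJeq]
    intro x hx
    have hx' : max a a' ≤ x.val ∧ x.val < min b b' := hx
    exact ⟨by omega, by omega⟩
  have hKI : K ⊆ I := by
    intro x hx
    have hx' : max a a' ≤ x.val ∧ x.val < min b b' := hx
    exact ⟨by omega, by omega⟩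
  have e1 := hJmin K hsecK hKJ
  have e2 := hmin K hsecK hKI
  rw [← e1, e2]
end

section
/- For σ, μ ∈ S_n, (σ, μ) ∈ ρ if and only if there exist pairwise disjoint sections J₁, …, J_t of σ with J₁ ∪ ⋯ ∪ J_t = {1,…,n} such that, for each i ∈ {1,…,t}, the restriction μ|_{J_i} equals σ|_{J_i} or (σ|_{J_i})⁻¹. -/
open scoped Classical



namespace RhoAux

variable {n : ℕ} (σ : Equiv.Perm (Fin n))

lemma permClosed_bijOn {I : Set (Fin n)} (h : PermClosed σ I) : Set.BijOn σ I I := by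
  have hm : Set.MapsTo σ I I := h
  exact ((Set.toFinite I).injOn_iff_bijOn_of_mapsTo hm).1 (σ.injective.injOn)

lemma permClosed_inv {I : Set (Fin n)} (h : PermClosed σ I) : PermClosed σ⁻¹ I := by
  intro i hi
  obtain ⟨j, hj, hji⟩ := (permClosed_bijOn σ h).surjOn hi
  have : σ⁻¹ i = j := by rw [← hji]; simp
  rw [this]; exact hj

lemma permClosed_compl {I : Set (Fin n)} (h : PermClosed σ I) : PermClosed σ Iᶜ := by
  intro i hi
  by_contra hmem
  have : σ⁻¹ (σ i) ∈ I := permClosed_inv σ h _ (not_not.1 hmem)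
  simp at this
  exact hi this

lemma permClosed_inter {I J : Set (Fin n)} (hI : PermClosed σ I) (hJ : PermClosed σ J) :
    PermClosed σ (I ∩ J) := fun i hi => ⟨hI i hi.1, hJ i hi.2⟩

/-- `c` is a cut of `σ`. -/
def Cut (c : ℕ) : Prop := PermClosed σ {x : Fin n | x.val < c}

lemma cut_zero : Cut σ 0 := fun i hi => absurd hi (by simp)

lemma cut_n : Cut σ n := fun i _ => (σ i).isLt

noncomputable def cutA (x : Fin n) : ℕ := Nat.findGreatest (Cut σ) x.val

lemma cutB_ex (x : Fin n) : ∃ c, x.val < c ∧ Cut σ c := ⟨n, x.isLt, cut_n σ⟩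

noncomputable def cutB (x : Fin n) : ℕ := Nat.find (cutB_ex σ x)

lemma cutA_le (x : Fin n) : cutA σ x ≤ x.val := Nat.findGreatest_le _

lemma cutA_cut (x : Fin n) : Cut σ (cutA σ x) :=
  Nat.findGreatest_spec (Nat.zero_le _) (cut_zero σ)

lemma lt_cutB (x : Fin n) : x.val < cutB σ x := (Nat.find_spec (cutB_ex σ x)).1

lemma cutB_cut (x : Fin n) : Cut σ (cutB σ x) := (Nat.find_spec (cutB_ex σ x)).2

lemma cutB_le (x : Fin n) : cutB σ x ≤ n := Nat.find_min' _ ⟨x.isLt, cut_n σ⟩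

lemma no_cut_between {x : Fin n} {c : ℕ} (h1 : cutA σ x < c) (h2 : c < cutB σ x) :
    ¬ Cut σ c := by
  intro hc
  rcases le_or_gt c x.val with h | h
  · exact absurd (Nat.le_findGreatest h hc) (not_le.2 h1)
  · exact Nat.find_min (cutB_ex σ x) h2 ⟨h, hc⟩

noncomputable def segOf (x : Fin n) : Set (Fin n) :=
  {y | cutA σ x ≤ y.val ∧ y.val < cutB σ x}

lemma mem_segOf (x : Fin n) : x ∈ segOf σ x := ⟨cutA_le σ x, lt_cutB σ x⟩

lemma isSection_of_cuts {c d : ℕ} (hc : Cut σ c) (hd : Cut σ d) (hcd : c < d) (hdn : d ≤ n) :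
    IsSection σ {y : Fin n | c ≤ y.val ∧ y.val < d} := by
  have hd0 : 0 < d := Nat.pos_of_ne_zero (by omega)
  refine ⟨⟨c, lt_of_lt_of_le hcd hdn⟩, ⟨d - 1, by omega⟩, ?_, ?_, ?_, ?_, ?_⟩
  · show c ≤ d - 1; omega
  · ext y; simp only [Set.mem_setOf_eq, Set.mem_Icc, Fin.le_def]; omega
  · have heq : {y : Fin n | c ≤ y.val ∧ y.val < d}
        = {y : Fin n | y.val < d} ∩ {y : Fin n | y.val < c}ᶜ := by
      ext y; simp only [Set.mem_setOf_eq, Set.mem_inter_iff, Set.mem_compl_iff]; omega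
    rw [heq]
    exact permClosed_inter σ hd (permClosed_compl σ hc)
  · have heq : {x : Fin n | x < (⟨c, lt_of_lt_of_le hcd hdn⟩ : Fin n)}
        = {y : Fin n | y.val < c} := by
      ext y; simp only [Set.mem_setOf_eq, Fin.lt_def]
    rw [heq]; exact hc
  · have heq : {x : Fin n | (⟨d - 1, by omega⟩ : Fin n) < x}
        = {y : Fin n | y.val < d}ᶜ := by
      ext y; simp only [Set.mem_setOf_eq, Set.mem_compl_iff, Fin.lt_def, not_lt]; omega
    rw [heq]; exact permClosed_compl σ hd

lemma cuts_of_isSection {I : Set (Fin n)} (h : IsSection σ I) :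
    ∃ u v : Fin n, u ≤ v ∧ I = {y : Fin n | u.val ≤ y.val ∧ y.val < v.val + 1} ∧
      Cut σ u.val ∧ Cut σ (v.val + 1) := by
  obtain ⟨u, v, huv, hI, _, hu, hv⟩ := h
  refine ⟨u, v, huv, ?_, ?_, ?_⟩
  · rw [hI]; ext y
    simp only [Set.mem_Icc, Set.mem_setOf_eq, Fin.le_def]; omega
  · have heq : {y : Fin n | y.val < u.val} = {x : Fin n | x < u} := by
      ext y; simp only [Set.mem_setOf_eq, Fin.lt_def]
    show PermClosed σ _
    rw [heq]; exact hu
  · have heq : {y : Fin n | y.val < v.val + 1} = {x : Fin n | v < x}ᶜ := by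
      ext y; simp only [Set.mem_setOf_eq, Set.mem_compl_iff, Fin.lt_def, not_lt]; omega
    show PermClosed σ _
    rw [heq]; exact permClosed_compl σ hv

lemma segOf_isSection (x : Fin n) : IsSection σ (segOf σ x) :=
  isSection_of_cuts σ (cutA_cut σ x) (cutB_cut σ x)
    (lt_of_le_of_lt (cutA_le σ x) (lt_cutB σ x)) (cutB_le σ x)

lemma cutA_eq_of_mem {x z : Fin n} (hz : z ∈ segOf σ x) : cutA σ z = cutA σ x := by
  obtain ⟨h1, h2⟩ := hz
  have hle : cutA σ x ≤ cutA σ z := Nat.le_findGreatest h1 (cutA_cut σ x)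
  rcases eq_or_lt_of_le hle with h | h
  · exact h.symm
  · exact absurd (cutA_cut σ z)
      (no_cut_between σ h (lt_of_le_of_lt (cutA_le σ z) h2))

lemma cutB_eq_of_mem {x z : Fin n} (hz : z ∈ segOf σ x) : cutB σ z = cutB σ x := by
  obtain ⟨h1, h2⟩ := hz
  have hle : cutB σ z ≤ cutB σ x := Nat.find_min' _ ⟨h2, cutB_cut σ x⟩
  rcases eq_or_lt_of_le hle with h | h
  · exact h
  · exact absurd (cutB_cut σ z)
      (no_cut_between σ (lt_of_le_of_lt h1 (lt_cutB σ z)) h)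

lemma segOf_eq_of_mem {x z : Fin n} (hz : z ∈ segOf σ x) : segOf σ z = segOf σ x := by
  unfold segOf
  rw [cutA_eq_of_mem σ hz, cutB_eq_of_mem σ hz]

lemma segOf_isSegment (x : Fin n) : IsSegment σ (segOf σ x) := by
  refine ⟨segOf_isSection σ x, ?_⟩
  intro J hJ hJI
  obtain ⟨u, v, huv, hJeq, hu, hv⟩ := cuts_of_isSection σ hJ
  have hu_mem : u ∈ J := by rw [hJeq]; exact ⟨le_refl _, by omega⟩
  have hv_mem : v ∈ J := by rw [hJeq]; exact ⟨huv, by omega⟩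
  have h1 : cutA σ x ≤ u.val := (hJI hu_mem).1
  have h2 : v.val < cutB σ x := (hJI hv_mem).2
  have hu_eq : u.val = cutA σ x := by
    by_contra hne
    exact no_cut_between σ (lt_of_le_of_ne h1 (Ne.symm hne))
      (by omega : (u.val : ℕ) < cutB σ x) hu
  have hv_eq : v.val + 1 = cutB σ x := by
    by_contra hne
    exact no_cut_between σ (by omega : cutA σ x < v.val + 1)
      (by omega : v.val + 1 < cutB σ x) hv
  rw [hJeq]
  unfold segOf
  ext y
  simp only [Set.mem_setOf_eq]
  omega

lemma exists_segOf_of_isSegment {I : Set (Fin n)} (h : IsSegment σ I) :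
    ∃ x, I = segOf σ x := by
  obtain ⟨hsec, hmin⟩ := h
  obtain ⟨u, v, huv, hIeq, hu, hv⟩ := cuts_of_isSection σ hsec
  refine ⟨u, ?_⟩
  have h1 : cutA σ u = u.val :=
    le_antisymm (cutA_le σ u) (Nat.le_findGreatest (le_refl _) hu)
  have h2 : cutB σ u ≤ v.val + 1 := Nat.find_min' _ ⟨by omega, hv⟩
  have hsub : segOf σ u ⊆ I := by
    intro y hy
    obtain ⟨hy1, hy2⟩ := hy
    rw [hIeq]
    exact ⟨by omega, by omega⟩
  exact (hmin _ (segOf_isSection σ u) hsub).symm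

lemma segOf_subset_section {x : Fin n} {I : Set (Fin n)} (hI : IsSection σ I) (hx : x ∈ I) :
    segOf σ x ⊆ I := by
  obtain ⟨u, v, huv, hIeq, hu, hv⟩ := cuts_of_isSection σ hI
  rw [hIeq] at hx
  have h1 : u.val ≤ cutA σ x := Nat.le_findGreatest hx.1 hu
  have h2 : cutB σ x ≤ v.val + 1 := Nat.find_min' _ ⟨hx.2, hv⟩
  intro y hy
  obtain ⟨hy1, hy2⟩ := hy
  rw [hIeq]
  exact ⟨by omega, by omega⟩

lemma permClosed_congr {σ μ : Equiv.Perm (Fin n)}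
    (hagree : ∀ k : Fin n, μ k = σ k ∨ μ k = σ⁻¹ k)
    {I : Set (Fin n)} (hI : PermClosed σ I) : PermClosed μ I := by
  intro i hi
  rcases hagree i with h | h
  · rw [h]; exact hI i hi
  · rw [h]; exact permClosed_inv σ hI i hi

end RhoAux

/-- `(σ, μ) ∈ ρ` iff `{1,…,n}` is the union of pairwise disjoint sections
`J₁, …, J_t` of `σ` on each of which `μ` coincides with `σ` or with `σ⁻¹`. -/
theorem rho_iff_disjoint_sections {n : ℕ} (σ μ : Equiv.Perm (Fin n)) :
    Rho σ μ ↔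
      ∃ (t : ℕ) (J : Fin t → Set (Fin n)),
        (∀ i, IsSection σ (J i)) ∧
        (∀ i j, i ≠ j → Disjoint (J i) (J j)) ∧
        (⋃ i, J i) = Set.univ ∧
        ∀ i, (∀ k ∈ J i, μ k = σ k) ∨ (∀ k ∈ J i, μ k = σ⁻¹ k) := by
  classical
  constructor
  · rintro ⟨hseg, hcond⟩
    set S : Finset (Fin n) := Finset.univ.filter (fun x => RhoAux.cutA σ x = x.val)
      with hSdef
    have hSmem : ∀ x ∈ S, RhoAux.cutA σ x = x.val := by
      intro x hx
      rw [hSdef, Finset.mem_filter] at hx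
      exact hx.2
    refine ⟨S.card, fun i => RhoAux.segOf σ ((S.equivFin.symm i : Fin n)), ?_, ?_, ?_, ?_⟩
    · intro i; exact RhoAux.segOf_isSection σ _
    · intro i j hij
      rw [Set.disjoint_left]
      intro z hzi hzj
      apply hij
      have h1 := RhoAux.cutA_eq_of_mem σ hzi
      have h2 := RhoAux.cutA_eq_of_mem σ hzj
      have hi' := hSmem _ (S.equivFin.symm i).2
      have hj' := hSmem _ (S.equivFin.symm j).2
      have hval : ((S.equivFin.symm i : Fin n)).val = ((S.equivFin.symm j : Fin n)).val := by
        omega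
      have heq : (S.equivFin.symm i) = (S.equivFin.symm j) := Subtype.ext (Fin.ext hval)
      exact S.equivFin.symm.injective heq
    · ext x
      simp only [Set.mem_iUnion, Set.mem_univ, iff_true]
      have hmlt : RhoAux.cutA σ x < n := lt_of_le_of_lt (RhoAux.cutA_le σ x) x.isLt
      set m : Fin n := ⟨RhoAux.cutA σ x, hmlt⟩ with hm
      have hmm : m ∈ RhoAux.segOf σ x :=
        ⟨le_refl _, lt_of_le_of_lt (RhoAux.cutA_le σ x) (RhoAux.lt_cutB σ x)⟩
      have hmS : m ∈ S := by
        rw [hSdef, Finset.mem_filter]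
        exact ⟨Finset.mem_univ _, RhoAux.cutA_eq_of_mem σ hmm⟩
      refine ⟨S.equivFin ⟨m, hmS⟩, ?_⟩
      have hcoe : ((S.equivFin.symm (S.equivFin ⟨m, hmS⟩) : Fin n)) = m := by simp
      rw [hcoe, RhoAux.segOf_eq_of_mem σ hmm]
      exact RhoAux.mem_segOf σ x
    · intro i
      exact hcond _ (RhoAux.segOf_isSegment σ _)
  · rintro ⟨t, J, hsec, hdisj, hcover, hcond⟩
    have hmem : ∀ k : Fin n, ∃ i, k ∈ J i := by
      intro k
      have : k ∈ ⋃ i, J i := hcover ▸ Set.mem_univ k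
      simpa using this
    have hJclosed : ∀ i, PermClosed σ (J i) := by
      intro i
      obtain ⟨u, v, _, _, hc, _, _⟩ := hsec i
      exact hc
    have hagree1 : ∀ k, μ k = σ k ∨ μ k = σ⁻¹ k := by
      intro k
      obtain ⟨i, hk⟩ := hmem k
      rcases hcond i with h | h
      · exact Or.inl (h k hk)
      · exact Or.inr (h k hk)
    have hμJ : ∀ i, PermClosed μ (J i) := by
      intro i k hk
      rcases hcond i with h | h
      · rw [h k hk]; exact hJclosed i k hk
      · rw [h k hk]; exact RhoAux.permClosed_inv σ (hJclosed i) k hk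
    have hagree2 : ∀ k, σ k = μ k ∨ σ k = μ⁻¹ k := by
      intro k
      obtain ⟨i, hk⟩ := hmem k
      rcases hcond i with h | h
      · exact Or.inl (h k hk).symm
      · refine Or.inr ?_
        have h1 : μ⁻¹ k ∈ J i := RhoAux.permClosed_inv μ (hμJ i) k hk
        have h2 : μ (μ⁻¹ k) = σ⁻¹ (μ⁻¹ k) := h (μ⁻¹ k) h1
        have h3 : σ⁻¹ (μ⁻¹ k) = k := by rw [← h2]; simp
        calc σ k = σ (σ⁻¹ (μ⁻¹ k)) := by rw [h3]
          _ = μ⁻¹ k := by simp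
    have hclosed : ∀ I : Set (Fin n), PermClosed σ I ↔ PermClosed μ I := fun I =>
      ⟨fun h => RhoAux.permClosed_congr hagree1 h,
       fun h => RhoAux.permClosed_congr hagree2 h⟩
    have hsecIff : ∀ I : Set (Fin n), IsSection σ I ↔ IsSection μ I := by
      intro I
      simp only [IsSection, hclosed]
    have hsegIff : ∀ I : Set (Fin n), IsSegment σ I ↔ IsSegment μ I := by
      intro I
      simp only [IsSegment, hsecIff]
    refine ⟨?_, ?_⟩
    · ext I
      exact hsegIff I
    · intro I hI
      obtain ⟨x, rfl⟩ := RhoAux.exists_segOf_of_isSegment σ hI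
      obtain ⟨i, hxi⟩ := hmem x
      have hsub : RhoAux.segOf σ x ⊆ J i := RhoAux.segOf_subset_section σ (hsec i) hxi
      rcases hcond i with h | h
      · exact Or.inl fun k hk => h k (hsub hk)
      · exact Or.inr fun k hk => h k (hsub hk)
end

section
/- The relation ρ ("sectionally inverted or equal") is an equivalence relation on S_n. -/
/-- A closed set (in a finite type) is also closed under the inverse permutation. -/
lemma permClosed_inv {n : ℕ} {σ : Equiv.Perm (Fin n)} {I : Set (Fin n)}
    (h : PermClosed σ I) : ∀ i ∈ I, σ⁻¹ i ∈ I := by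
  intro i hi
  have hmaps : Set.MapsTo σ I I := h
  have hfin : I.Finite := Set.toFinite I
  have hinj : Set.InjOn σ I := σ.injective.injOn
  have hsurj : Set.SurjOn σ I I :=
    ((hfin.injOn_iff_bijOn_of_mapsTo hmaps).mp hinj).surjOn
  obtain ⟨j, hj, hji⟩ := hsurj hi
  have hj' : σ⁻¹ i = j := by
    rw [← hji]; simp
  rw [hj']; exact hj

/-- `ρ` ("sectionally inverted or equal") is an equivalence relation
on the set of permutations of `{1,…,n}`. -/
theorem rho_equivalence {n : ℕ} : Equivalence (Rho (n := n)) := by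
  constructor
  · intro σ
    exact ⟨rfl, fun I _ => Or.inl fun i _ => rfl⟩
  · rintro σ μ ⟨hseg, hval⟩
    refine ⟨hseg.symm, fun I hI => ?_⟩
    have hIσ : I ∈ Seg σ := hseg ▸ hI
    have hclosed : PermClosed σ I := by
      obtain ⟨⟨u, v, _, _, hc, _, _⟩, _⟩ := hIσ
      exact hc
    rcases hval I hIσ with h | h
    · exact Or.inl fun i hi => (h i hi).symm
    · refine Or.inr fun i hi => ?_
      have hσi : σ i ∈ I := hclosed i hi
      have : μ (σ i) = i := by rw [h (σ i) hσi]; simp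
      calc σ i = μ⁻¹ (μ (σ i)) := by simp
        _ = μ⁻¹ i := by rw [this]
  · rintro σ μ τ ⟨hseg1, hval1⟩ ⟨hseg2, hval2⟩
    refine ⟨hseg1.trans hseg2, fun I hI => ?_⟩
    have hclosed : PermClosed σ I := by
      obtain ⟨⟨u, v, _, _, hc, _, _⟩, _⟩ := hI
      exact hc
    have hIμ : I ∈ Seg μ := hseg1 ▸ hI
    rcases hval1 I hI with h1 | h1 <;> rcases hval2 I hIμ with h2 | h2
    · exact Or.inl fun i hi => (h2 i hi).trans (h1 i hi)
    · -- τ = μ⁻¹ on I, μ = σ on I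
      refine Or.inr fun i hi => ?_
      rw [h2 i hi]
      have hσi : σ⁻¹ i ∈ I := permClosed_inv hclosed i hi
      have : μ (σ⁻¹ i) = i := by rw [h1 _ hσi]; simp
      calc μ⁻¹ i = μ⁻¹ (μ (σ⁻¹ i)) := by rw [this]
        _ = σ⁻¹ i := by simp
    · exact Or.inr fun i hi => (h2 i hi).trans (h1 i hi)
    · -- τ = μ⁻¹ on I, μ = σ⁻¹ on I
      refine Or.inl fun i hi => ?_
      rw [h2 i hi]
      have hσi : σ i ∈ I := hclosed i hi
      have : μ (σ i) = i := by rw [h1 _ hσi]; simp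
      calc μ⁻¹ i = μ⁻¹ (μ (σ i)) := by rw [this]
        _ = σ i := by simp
end
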